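/- arXiv:2001.01275 — 3 statements merged into one kernel-verified Lean document; each statement's English description precedes it below -/
import Mathlib

section
/- For two nonzero vectors w_m, w_n in R^d with angle θ between them (θ ∈ [0, π]), if x is drawn uniformly from the unit sphere in R^d, then the probability that sgn(⟨x, w_m⟩) = sgn(⟨x, w_n⟩) equals 1 − θ/π. -/
open MeasureTheory Real
open scoped RealInnerProductSpace ENNReal

noncomputable def sgn (x : ℝ) : ℝ := if 0 ≤ x then 1 else -1

namespace LSH

variable {E : Type*} [NormedAddCommGroup E] [InnerProductSpace ℝ E]

/-- Rotation by angle `α` in the plane spanned by `w`, `v`, fixing the complement. -/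
noncomputable def rotL (w v : E) (α : ℝ) : E →ₗ[ℝ] E where
  toFun x := x + ((Real.cos α - 1) * ⟪x, w⟫ - Real.sin α * ⟪x, v⟫) • w
    + (Real.sin α * ⟪x, w⟫ + (Real.cos α - 1) * ⟪x, v⟫) • v
  map_add' x y := by
    simp only [inner_add_left]
    module
  map_smul' c x := by
    simp only [inner_smul_left, RingHom.id_apply, conj_trivial]
    module

variable {w v : E} (hww : ⟪w, w⟫ = 1) (hvv : ⟪v, v⟫ = 1) (hwv : ⟪w, v⟫ = 0)

lemma rotL_apply (α : ℝ) (x : E) : rotL w v α x = x + ((Real.cos α - 1) * ⟪x, w⟫ - Real.sin α * ⟪x, v⟫) • w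
    + (Real.sin α * ⟪x, w⟫ + (Real.cos α - 1) * ⟪x, v⟫) • v := rfl

include hww hwv in
lemma inner_rotL_w (α : ℝ) (x : E) : ⟪rotL w v α x, w⟫ = Real.cos α * ⟪x, w⟫ - Real.sin α * ⟪x, v⟫ := by
  simp [rotL_apply, inner_add_left, real_inner_smul_left, hww, real_inner_comm v w ▸ hwv]
  rw [← real_inner_self_eq_norm_sq, hww]
  ring

include hvv hwv in
lemma inner_rotL_v (α : ℝ) (x : E) : ⟪rotL w v α x, v⟫ = Real.sin α * ⟪x, w⟫ + Real.cos α * ⟪x, v⟫ := by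
  simp [rotL_apply, inner_add_left, real_inner_smul_left, hvv, hwv]
  rw [← real_inner_self_eq_norm_sq, hvv]
  ring

include hww hvv hwv in
lemma rotL_comp (α β : ℝ) (x : E) : rotL w v α (rotL w v β x) = rotL w v (α + β) x := by
  rw [rotL_apply α (rotL w v β x), inner_rotL_w hww hwv, inner_rotL_v hvv hwv, rotL_apply, rotL_apply]
  rw [Real.cos_add, Real.sin_add]
  match_scalars <;> ring

end LSH

namespace LSH

variable {E : Type*} [NormedAddCommGroup E] [InnerProductSpace ℝ E]
variable {w v : E} (hww : ⟪w, w⟫ = 1) (hvv : ⟪v, v⟫ = 1) (hwv : ⟪w, v⟫ = 0)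

lemma rotL_zero (x : E) : rotL w v 0 x = x := by
  simp [rotL_apply]

include hww hvv hwv in
lemma inner_rotL_self (α : ℝ) (x : E) :
    ⟪rotL w v α x, rotL w v α x⟫ = ⟪x, x⟫ := by
  have hs := Real.sin_sq_add_cos_sq α
  have hvw : ⟪v, w⟫ = (0 : ℝ) := by rw [real_inner_comm]; exact hwv
  have hwx : ⟪w, x⟫ = ⟪x, w⟫ := real_inner_comm x w
  have hvx : ⟪v, x⟫ = ⟪x, v⟫ := real_inner_comm x v
  simp only [rotL_apply, inner_add_left, inner_add_right, real_inner_smul_left,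
    real_inner_smul_right]
  rw [hww, hvv, hwv, hvw, hwx, hvx]
  linear_combination (⟪x, w⟫ ^ 2 + ⟪x, v⟫ ^ 2) * hs

/-- Rotation by `α` in the plane of the orthonormal pair `w, v` as a linear isometry equiv. -/
noncomputable def rot (hww : ⟪w, w⟫ = 1) (hvv : ⟪v, v⟫ = 1) (hwv : ⟪w, v⟫ = 0) (α : ℝ) :
    E ≃ₗᵢ[ℝ] E where
  toLinearEquiv := LinearEquiv.ofLinear (rotL w v α) (rotL w v (-α))
    (by ext x
        simp [LinearMap.comp_apply, rotL_comp hww hvv hwv, rotL_zero])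
    (by ext x
        simp [LinearMap.comp_apply, rotL_comp hww hvv hwv, rotL_zero])
  norm_map' x := by
    have h := inner_rotL_self hww hvv hwv α x
    rw [real_inner_self_eq_norm_mul_norm, real_inner_self_eq_norm_mul_norm] at h
    exact (mul_self_inj (norm_nonneg _) (norm_nonneg _)).mp h

lemma rot_apply (α : ℝ) (x : E) : rot hww hvv hwv α x = rotL w v α x := rfl

include hww hvv hwv in
lemma rot_apply_w (α : ℝ) : rot hww hvv hwv α w = Real.cos α • w + Real.sin α • v := by
  rw [rot_apply, rotL_apply, hww, hwv]
  match_scalars <;> ring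

include hww hvv hwv in
lemma rot_apply_orth (α : ℝ) {y : E} (h1 : ⟪y, w⟫ = 0) (h2 : ⟪y, v⟫ = 0) :
    rot hww hvv hwv α y = y := by
  rw [rot_apply, rotL_apply, h1, h2]
  match_scalars <;> ring

lemma inner_rot_symm (α : ℝ) (x y : E) :
    ⟪(rot hww hvv hwv α).symm x, y⟫ = ⟪x, rot hww hvv hwv α y⟫ := by
  conv_rhs => rw [← (rot hww hvv hwv α).apply_symm_apply x]
  rw [LinearIsometryEquiv.inner_map_map]

end LSH

namespace LSH

variable {E : Type*} [NormedAddCommGroup E] [InnerProductSpace ℝ E]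
  [MeasurableSpace E] [BorelSpace E]

lemma measurable_inner_right (c : E) : Measurable fun x : E => (⟪x, c⟫ : ℝ) :=
  (continuous_id.inner continuous_const).measurable

lemma measurableSet_inner_eq (c : E) : MeasurableSet {x : E | ⟪x, c⟫ = (0 : ℝ)} :=
  measurable_inner_right c (measurableSet_singleton 0)

variable [FiniteDimensional ℝ E]

variable (μ : Measure E) [IsProbabilityMeasure μ]

lemma sphere_compl_null (hsupp : μ (Metric.sphere (0 : E) 1) = 1) :
    μ (Metric.sphere (0 : E) 1)ᶜ = 0 := by
  rw [measure_compl Metric.isClosed_sphere.measurableSet (measure_ne_top μ _), hsupp,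
    measure_univ, tsub_self]

lemma null_orth_aux
    (hsupp : μ (Metric.sphere (0 : E) 1) = 1)
    (hrot : ∀ O : E ≃ₗᵢ[ℝ] E, Measure.map O μ = μ) :
    ∀ (m k : ℕ), Module.finrank ℝ E ≤ k + m → 1 ≤ k →
      ∀ w : Fin k → E, Orthonormal ℝ w → μ {x | ∀ i, ⟪x, w i⟫ = 0} = 0 := by
  intro m
  induction m with
  | zero =>
    intro k hk h1 w hw
    have hsub : {x : E | ∀ i, ⟪x, w i⟫ = 0} ⊆ {(0 : E)} := by
      intro x hx
      have hspan : Submodule.span ℝ (Set.range w) = ⊤ := by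
        apply Submodule.eq_top_of_finrank_eq
        rw [finrank_span_eq_card hw.linearIndependent]
        have hle : k ≤ Module.finrank ℝ E := by
          simpa using hw.linearIndependent.fintype_card_le_finrank
        simpa using le_antisymm hle (by simpa using hk)
      have hx' : x ∈ (Submodule.span ℝ (Set.range w))ᗮ := by
        rw [Submodule.mem_orthogonal]
        intro u hu
        induction hu using Submodule.span_induction with
        | mem y hy => obtain ⟨i, rfl⟩ := hy; rw [real_inner_comm]; exact hx i
        | zero => simp
        | add y z _ _ hy hz => rw [inner_add_left, hy, hz, add_zero]
        | smul c y _ hy => rw [inner_smul_left, hy, mul_zero]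
      rw [hspan, Submodule.top_orthogonal_eq_bot] at hx'
      simpa using hx'
    refine measure_mono_null (hsub.trans ?_) (sphere_compl_null μ hsupp)
    intro y hy
    simp only [Set.mem_singleton_iff] at hy
    subst hy
    simp [Metric.mem_sphere]
  | succ m ih =>
    intro k hk h1 w hw
    by_cases hkm : Module.finrank ℝ E ≤ k + m
    · exact ih k hkm h1 w hw
    push_neg at hkm
    -- find a unit vector orthogonal to all `w i`
    have hS : Submodule.span ℝ (Set.range w) ≠ ⊤ := by
      intro htop
      have h2 := finrank_span_eq_card hw.linearIndependent
      rw [htop, finrank_top] at h2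
      simp only [Fintype.card_fin] at h2
      omega
    have hbot : (Submodule.span ℝ (Set.range w))ᗮ ≠ ⊥ := by
      simp only [ne_eq, Submodule.orthogonal_eq_bot_iff]
      exact hS
    obtain ⟨v0, hv0mem, hv0ne⟩ := Submodule.exists_mem_ne_zero_of_ne_bot hbot
    set v : E := ‖v0‖⁻¹ • v0 with hvdef
    have hvnorm : ‖v‖ = 1 := by
      rw [hvdef, norm_smul, norm_inv, norm_norm, inv_mul_cancel₀ (norm_ne_zero_iff.mpr hv0ne)]
    have hvmem : v ∈ (Submodule.span ℝ (Set.range w))ᗮ := Submodule.smul_mem _ _ hv0mem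
    have hwiv : ∀ i, ⟪w i, v⟫ = (0 : ℝ) := fun i =>
      (Submodule.mem_orthogonal _ v).mp hvmem (w i) (Submodule.subset_span ⟨i, rfl⟩)
    have hvv : ⟪v, v⟫ = (1 : ℝ) := by
      rw [real_inner_self_eq_norm_mul_norm, hvnorm]; norm_num
    set i0 : Fin k := ⟨0, h1⟩ with hi0def
    have hww0 : ⟪w i0, w i0⟫ = (1 : ℝ) := by
      rw [real_inner_self_eq_norm_mul_norm, hw.1 i0]; norm_num
    have hw0v : ⟪w i0, v⟫ = (0 : ℝ) := hwiv i0
    set R : ℝ → E ≃ₗᵢ[ℝ] E := fun α => rot hww0 hvv hw0v α with hR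
    set H : ℝ → Set E := fun α =>
      {x | ⟪x, Real.cos α • w i0 + Real.sin α • v⟫ = (0 : ℝ) ∧
        ∀ i, i ≠ i0 → ⟪x, w i⟫ = (0 : ℝ)} with hH
    set K : Set E := {x | (∀ i, ⟪x, w i⟫ = (0 : ℝ)) ∧ ⟪x, v⟫ = (0 : ℝ)} with hK
    have hH0 : H 0 = {x | ∀ i, ⟪x, w i⟫ = (0 : ℝ)} := by
      ext x
      simp only [hH, Real.cos_zero, Real.sin_zero, one_smul, zero_smul, add_zero,
        Set.mem_setOf_eq]
      constructor
      · rintro ⟨h0, hrest⟩ i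
        by_cases hi : i = i0
        · rw [hi]; exact h0
        · exact hrest i hi
      · intro h; exact ⟨h i0, fun i _ => h i⟩
    have hHmeas : ∀ α, MeasurableSet (H α) := by
      intro α
      have hrw : H α = {x : E | ⟪x, Real.cos α • w i0 + Real.sin α • v⟫ = (0 : ℝ)} ∩
          ⋂ i, {x : E | i ≠ i0 → ⟪x, w i⟫ = (0 : ℝ)} := by
        ext x; simp [hH, Set.mem_iInter]
      rw [hrw]
      refine (measurableSet_inner_eq _).inter (MeasurableSet.iInter fun i => ?_)
      by_cases hi : i = i0
      · simp only [hi]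
        have : {x : E | i0 ≠ i0 → ⟪x, w i0⟫ = (0 : ℝ)} = Set.univ := by
          ext x; simp
        rw [this]; exact MeasurableSet.univ
      · have : {x : E | i ≠ i0 → ⟪x, w i⟫ = (0 : ℝ)} = {x : E | ⟪x, w i⟫ = (0 : ℝ)} := by
          ext x; simp [hi]
        rw [this]; exact measurableSet_inner_eq _
    have hKmeas : MeasurableSet K := by
      have hrw : K = (⋂ i, {x : E | ⟪x, w i⟫ = (0 : ℝ)}) ∩ {x : E | ⟪x, v⟫ = (0 : ℝ)} := by
        ext x; simp [hK, Set.mem_iInter]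
      rw [hrw]
      exact (MeasurableSet.iInter fun i => measurableSet_inner_eq _).inter
        (measurableSet_inner_eq _)
    have hpre : ∀ α, (R α).symm ⁻¹' (H 0) = H α := by
      intro α
      ext x
      rw [hH0]
      simp only [Set.mem_preimage, Set.mem_setOf_eq, hH]
      have key : ∀ y : E, ⟪(R α).symm x, y⟫ = ⟪x, R α y⟫ := fun y =>
        inner_rot_symm hww0 hvv hw0v α x y
      have hfix : ∀ i, i ≠ i0 → R α (w i) = w i := fun i hi =>
        rot_apply_orth hww0 hvv hw0v α (hw.2 hi) (hwiv i)
      have hmove : R α (w i0) = Real.cos α • w i0 + Real.sin α • v :=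
        rot_apply_w hww0 hvv hw0v α
      constructor
      · intro h
        refine ⟨?_, fun i hi => ?_⟩
        · have := h i0; rwa [key, hmove] at this
        · have := h i; rwa [key, hfix i hi] at this
      · rintro ⟨h0, hrest⟩ i
        by_cases hi : i = i0
        · rw [hi, key, hmove]; exact h0
        · rw [key, hfix i hi]; exact hrest i hi
    have hμH : ∀ α, μ (H α) = μ (H 0) := by
      intro α
      calc μ (H α) = μ ((R α).symm ⁻¹' (H 0)) := by rw [hpre]
        _ = Measure.map (R α).symm μ (H 0) :=
            (Measure.map_apply (R α).symm.continuous.measurable (hHmeas 0)).symm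
        _ = μ (H 0) := by rw [hrot]
    have hKnull : μ K = 0 := by
      set w' : Fin (k + 1) → E := Fin.snoc w v with hw'def
      have hwON := orthonormal_iff_ite.mp hw
      have hon : Orthonormal ℝ w' := by
        rw [orthonormal_iff_ite]
        intro i j
        rcases Fin.eq_castSucc_or_eq_last i with ⟨i', rfl⟩ | rfl <;>
          rcases Fin.eq_castSucc_or_eq_last j with ⟨j', rfl⟩ | rfl
        · have := hwON i' j'
          simp only [hw'def, Fin.snoc_castSucc]
          rw [this]
          by_cases h : i' = j'
          · simp [h]
          · simp [h, fun hc => h (Fin.castSucc_injective _ hc)]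
        · simp [hw'def, Fin.snoc_castSucc, Fin.snoc_last, hwiv i',
            (Fin.castSucc_lt_last i').ne]
        · have : ⟪v, w j'⟫ = (0 : ℝ) := by rw [real_inner_comm]; exact hwiv j'
          simp [hw'def, Fin.snoc_castSucc, Fin.snoc_last, this,
            (Fin.castSucc_lt_last j').ne']
        · simp [hw'def, Fin.snoc_last, hvv, hvnorm]
      have hih := ih (k + 1) (by omega) (by omega) w' hon
      have hset : {x : E | ∀ i, ⟪x, w' i⟫ = (0 : ℝ)} = K := by
        ext x
        simp only [hK, Set.mem_setOf_eq]
        constructor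
        · intro h
          refine ⟨fun i => ?_, ?_⟩
          · have := h i.castSucc; rwa [hw'def, Fin.snoc_castSucc] at this
          · have := h (Fin.last k); rwa [hw'def, Fin.snoc_last] at this
        · rintro ⟨ha, hb⟩ i
          rcases Fin.eq_castSucc_or_eq_last i with ⟨i', rfl⟩ | rfl
          · rw [hw'def, Fin.snoc_castSucc]; exact ha i'
          · rw [hw'def, Fin.snoc_last]; exact hb
      rwa [hset] at hih
    have hdisj : ∀ α β, 0 ≤ α → α < β → β < π → ∀ x, x ∈ H α → x ∈ H β → x ∈ K := by
      intro α β hα hαβ hβπ x hxα hxβ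
      obtain ⟨hα1, hα2⟩ := hxα
      obtain ⟨hβ1, hβ2⟩ := hxβ
      rw [inner_add_right, real_inner_smul_right, real_inner_smul_right] at hα1 hβ1
      have hsin : Real.sin (β - α) ≠ 0 :=
        ne_of_gt (Real.sin_pos_of_pos_of_lt_pi (by linarith) (by linarith))
      have ha : ⟪x, w i0⟫ = (0 : ℝ) := by
        have h : Real.sin (β - α) * ⟪x, w i0⟫ = 0 := by
          rw [Real.sin_sub]
          linear_combination Real.sin β * hα1 - Real.sin α * hβ1
        rcases mul_eq_zero.mp h with h' | h'
        · exact absurd h' hsin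
        · exact h'
      have hb : ⟪x, v⟫ = (0 : ℝ) := by
        have h : Real.sin (β - α) * ⟪x, v⟫ = 0 := by
          rw [Real.sin_sub]
          linear_combination Real.cos α * hβ1 - Real.cos β * hα1
        rcases mul_eq_zero.mp h with h' | h'
        · exact absurd h' hsin
        · exact h'
      refine ⟨fun i => ?_, hb⟩
      by_cases hi : i = i0
      · rw [hi]; exact ha
      · exact hα2 i hi
    have hbound : ∀ n : ℕ, (n : ℝ≥0∞) * μ (H 0) ≤ 1 := by
      intro n
      rcases Nat.eq_zero_or_pos n with rfl | hn
      · simp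
      set f : Fin n → ℝ := fun j => (j : ℕ) * (π / n) with hf
      have hfb : ∀ j : Fin n, 0 ≤ f j ∧ f j < π := by
        intro j
        have hπn : 0 < π / n := div_pos Real.pi_pos (by exact_mod_cast hn)
        constructor
        · positivity
        · have : ((j : ℕ) : ℝ) < n := by exact_mod_cast j.2
          calc (j : ℕ) * (π / n) < n * (π / n) := by
                apply mul_lt_mul_of_pos_right this hπn
            _ = π := by field_simp
      have hfmono : ∀ j j' : Fin n, j < j' → f j < f j' := by
        intro j j' hlt
        have hπn : 0 < π / n := div_pos Real.pi_pos (by exact_mod_cast hn)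
        have : ((j : ℕ) : ℝ) < (j' : ℕ) := by exact_mod_cast hlt
        exact mul_lt_mul_of_pos_right this hπn
      have hpair : Pairwise (Function.onFun Disjoint fun j : Fin n => H (f j) \ K) := by
        intro j j' hne
        rw [Function.onFun, Set.disjoint_left]
        intro x hx hx'
        rcases lt_or_gt_of_ne hne with h | h
        · exact hx'.2 (hdisj (f j) (f j') (hfb j).1 (hfmono _ _ h) (hfb j').2 x hx.1 hx'.1)
        · exact hx.2 (hdisj (f j') (f j) (hfb j').1 (hfmono _ _ h) (hfb j).2 x hx'.1 hx.1)
      have hsum := measure_iUnion (μ := μ) hpair (fun j => (hHmeas _).diff hKmeas)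
      have heq : ∀ j : Fin n, μ (H (f j) \ K) = μ (H 0) := fun j => by
        rw [measure_diff_null hKnull, hμH]
      calc (n : ℝ≥0∞) * μ (H 0) = ∑' j : Fin n, μ (H (f j) \ K) := by
            rw [tsum_fintype]
            simp [heq, Finset.sum_const, nsmul_eq_mul]
        _ = μ (⋃ j, H (f j) \ K) := hsum.symm
        _ ≤ 1 := prob_le_one
    have hreal : ∀ n : ℕ, (n : ℝ) * (μ (H 0)).toReal ≤ 1 := by
      intro n
      have h := hbound n
      have h2 := ENNReal.toReal_mono (by norm_num) h
      rwa [ENNReal.toReal_mul, ENNReal.toReal_natCast, ENNReal.toReal_one] at h2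
    have hc0 : μ (H 0) = 0 := by
      have htr : (μ (H 0)).toReal = 0 := by
        by_contra hne
        have hpos : 0 < (μ (H 0)).toReal := lt_of_le_of_ne ENNReal.toReal_nonneg (Ne.symm hne)
        obtain ⟨n, hn⟩ := exists_nat_gt (1 / (μ (H 0)).toReal)
        have := hreal n
        rw [div_lt_iff₀ hpos] at hn
        nlinarith
      rcases (ENNReal.toReal_eq_zero_iff _).mp htr with h | h
      · exact h
      · exact absurd h (measure_ne_top μ _)
    rw [hH0] at hc0
    exact hc0

end LSH

namespace LSH

variable {E : Type*} [NormedAddCommGroup E] [InnerProductSpace ℝ E]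

lemma sgn_eq_sgn_iff (a b : ℝ) : sgn a = sgn b ↔ (0 ≤ a ↔ 0 ≤ b) := by
  unfold sgn
  split_ifs with h1 h2 h2 <;> constructor <;> intro h <;> first | tauto | norm_num at h

lemma sgn_mul_pos (c a : ℝ) (hc : 0 < c) : sgn (c * a) = sgn a := by
  rw [sgn_eq_sgn_iff]
  constructor
  · intro h; nlinarith
  · intro h; positivity

lemma sgn_eq_sgn_neg_iff (a : ℝ) : sgn a = sgn (-a) ↔ a = 0 := by
  rw [sgn_eq_sgn_iff]
  constructor
  · intro h
    by_contra hne
    rcases lt_or_gt_of_ne hne with h' | h'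
    · have := h.mpr (by linarith); linarith
    · have := h.mp (by linarith); linarith
  · intro h; rw [h]; norm_num

/-- The "agreement" set. -/
def Aset (u v : E) : Set E := {x | sgn ⟪x, u⟫ = sgn ⟪x, v⟫}

/-- The "disagreement" set. -/
def Dset (u v : E) : Set E := (Aset u v)ᶜ

variable [MeasurableSpace E] [BorelSpace E]

lemma measurableSet_Aset (u v : E) : MeasurableSet (Aset u v) := by
  have hrw : Aset u v = ({x : E | 0 ≤ ⟪x, u⟫} ∩ {x : E | 0 ≤ ⟪x, v⟫}) ∪
      ({x : E | 0 ≤ ⟪x, u⟫}ᶜ ∩ {x : E | 0 ≤ ⟪x, v⟫}ᶜ) := by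
    ext x
    simp only [Aset, Set.mem_setOf_eq, sgn_eq_sgn_iff, Set.mem_union, Set.mem_inter_iff,
      Set.mem_compl_iff, Set.mem_setOf_eq]
    tauto
  have hu : MeasurableSet {x : E | 0 ≤ ⟪x, u⟫} :=
    measurable_inner_right u measurableSet_Ici
  have hv : MeasurableSet {x : E | 0 ≤ ⟪x, v⟫} :=
    measurable_inner_right v measurableSet_Ici
  rw [hrw]
  exact (hu.inter hv).union (hu.compl.inter hv.compl)

lemma measurableSet_Dset (u v : E) : MeasurableSet (Dset u v) :=
  (measurableSet_Aset u v).compl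

variable (μ : Measure E) [IsProbabilityMeasure μ]

lemma measure_Dset_map (hrot : ∀ O : E ≃ₗᵢ[ℝ] E, Measure.map O μ = μ)
    (O : E ≃ₗᵢ[ℝ] E) (u v : E) : μ (Dset (O u) (O v)) = μ (Dset u v) := by
  have hpre : Dset (O u) (O v) = O.symm ⁻¹' (Dset u v) := by
    ext x
    simp only [Dset, Aset, Set.mem_compl_iff, Set.mem_setOf_eq, Set.mem_preimage]
    have h1 : ⟪x, O u⟫ = ⟪O.symm x, u⟫ := by
      conv_lhs => rw [← O.apply_symm_apply x]
      rw [LinearIsometryEquiv.inner_map_map]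
    have h2 : ⟪x, O v⟫ = ⟪O.symm x, v⟫ := by
      conv_lhs => rw [← O.apply_symm_apply x]
      rw [LinearIsometryEquiv.inner_map_map]
    rw [h1, h2]
  rw [hpre, ← Measure.map_apply O.symm.continuous.measurable (measurableSet_Dset u v), hrot]

lemma measure_Aset_compl (u v : E) : μ (Aset u v) = 1 - μ (Dset u v) := by
  rw [Dset, measure_compl (measurableSet_Aset u v) (measure_ne_top μ _), measure_univ]
  rw [ENNReal.sub_sub_cancel ENNReal.one_ne_top (prob_le_one)]

end LSH

namespace LSH

variable {E : Type*} [NormedAddCommGroup E] [InnerProductSpace ℝ E]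
  [MeasurableSpace E] [BorelSpace E] [FiniteDimensional ℝ E]
  (μ : Measure E) [IsProbabilityMeasure μ]

lemma null_hyperplane
    (hsupp : μ (Metric.sphere (0 : E) 1) = 1)
    (hrot : ∀ O : E ≃ₗᵢ[ℝ] E, Measure.map O μ = μ)
    (u : E) (hu : u ≠ 0) :
    μ {x : E | ⟪x, u⟫ = (0 : ℝ)} = 0 := by
  have hnz : ‖u‖ ≠ 0 := norm_ne_zero_iff.mpr hu
  set w : Fin 1 → E := fun _ => ‖u‖⁻¹ • u with hwdef
  have hon : Orthonormal ℝ w := by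
    rw [orthonormal_iff_ite]
    intro i j
    have hij : i = j := Subsingleton.elim i j
    rw [hij, if_pos rfl]
    have hn1 : ‖(‖u‖⁻¹ : ℝ) • u‖ = 1 := by
      rw [norm_smul, norm_inv, norm_norm, inv_mul_cancel₀ hnz]
    show ⟪w j, w j⟫ = (1 : ℝ)
    rw [hwdef]
    rw [real_inner_self_eq_norm_mul_norm, hn1, mul_one]
  have h := null_orth_aux μ hsupp hrot (Module.finrank ℝ E) 1 (by omega) le_rfl w hon
  have hset : {x : E | ∀ i : Fin 1, ⟪x, w i⟫ = (0 : ℝ)} = {x : E | ⟪x, u⟫ = (0 : ℝ)} := by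
    ext x
    simp only [Set.mem_setOf_eq, hwdef, real_inner_smul_right]
    constructor
    · intro hx
      have := hx 0
      rcases mul_eq_zero.mp this with h' | h'
      · exact absurd h' (inv_ne_zero hnz)
      · exact h'
    · intro hx _
      rw [hx, mul_zero]
  rwa [hset] at h

/-- Map one orthonormal pair to another by a linear isometry equivalence. -/
lemma exists_isometryEquiv_pair
    {e1 e2 f1 f2 : E}
    (h1 : ⟪e1, e1⟫ = (1 : ℝ)) (h2 : ⟪e2, e2⟫ = (1 : ℝ)) (h12 : ⟪e1, e2⟫ = (0 : ℝ))
    (g1 : ⟪f1, f1⟫ = (1 : ℝ)) (g2 : ⟪f2, f2⟫ = (1 : ℝ)) (g12 : ⟪f1, f2⟫ = (0 : ℝ))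
    (hn : 2 ≤ Module.finrank ℝ E) :
    ∃ O : E ≃ₗᵢ[ℝ] E, O e1 = f1 ∧ O e2 = f2 := by
  set n := Module.finrank ℝ E with hndef
  set s : Set (Fin n) := {j | (j : ℕ) < 2} with hsdef
  have key : ∀ a b : E, ⟪a, a⟫ = (1 : ℝ) → ⟪b, b⟫ = (1 : ℝ) → ⟪a, b⟫ = (0 : ℝ) →
      Orthonormal ℝ (s.restrict (fun j : Fin n => if (j : ℕ) = 0 then a else b)) := by
    intro a b ha hb hab
    have hba : ⟪b, a⟫ = (0 : ℝ) := by rw [real_inner_comm]; exact hab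
    rw [orthonormal_iff_ite]
    rintro ⟨i, hi⟩ ⟨j, hj⟩
    change ⟪(if (i : ℕ) = 0 then a else b), (if (j : ℕ) = 0 then a else b)⟫ =
      if (⟨i, hi⟩ : s) = ⟨j, hj⟩ then (1 : ℝ) else 0
    have hi' : (i : ℕ) < 2 := hi
    have hj' : (j : ℕ) < 2 := hj
    by_cases hi0 : (i : ℕ) = 0 <;> by_cases hj0 : (j : ℕ) = 0
    · have heq : (⟨i, hi⟩ : s) = ⟨j, hj⟩ := Subtype.ext (show i = j from Fin.ext (by omega))
      simp [hi0, hj0, heq, ha, (show ‖a‖ = 1 by nlinarith [norm_nonneg a, real_inner_self_eq_norm_sq a])]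
    · have hne : (⟨i, hi⟩ : s) ≠ ⟨j, hj⟩ := by
        intro hc
        have hval : i = j := congrArg Subtype.val hc
        have := Fin.ext_iff.mp hval
        omega
      simp [hi0, hj0, hne, hab]
    · have hne : (⟨i, hi⟩ : s) ≠ ⟨j, hj⟩ := by
        intro hc
        have hval : i = j := congrArg Subtype.val hc
        have := Fin.ext_iff.mp hval
        omega
      simp [hi0, hj0, hne, hba]
    · have heq : (⟨i, hi⟩ : s) = ⟨j, hj⟩ := Subtype.ext (show i = j from Fin.ext (by omega))
      simp [hi0, hj0, heq, hb, (show ‖b‖ = 1 by nlinarith [norm_nonneg b, real_inner_self_eq_norm_sq b])]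
  obtain ⟨be, hbe⟩ := (key e1 e2 h1 h2 h12).exists_orthonormalBasis_extension_of_card_eq
    (by simp [hndef])
  obtain ⟨bf, hbf⟩ := (key f1 f2 g1 g2 g12).exists_orthonormalBasis_extension_of_card_eq
    (by simp [hndef])
  set j0 : Fin n := ⟨0, by omega⟩ with hj0def
  set j1 : Fin n := ⟨1, by omega⟩ with hj1def
  have hj0s : j0 ∈ s := by simp [hsdef, hj0def]
  have hj1s : j1 ∈ s := by simp [hsdef, hj1def]
  have hbe0 : be j0 = e1 := by rw [hbe j0 hj0s]; simp [hj0def]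
  have hbe1 : be j1 = e2 := by rw [hbe j1 hj1s]; simp [hj1def]
  have hbf0 : bf j0 = f1 := by rw [hbf j0 hj0s]; simp [hj0def]
  have hbf1 : bf j1 = f2 := by rw [hbf j1 hj1s]; simp [hj1def]
  refine ⟨be.repr.trans bf.repr.symm, ?_, ?_⟩
  · rw [LinearIsometryEquiv.trans_apply, ← hbe0, ← hbf0, OrthonormalBasis.repr_self,
      ← OrthonormalBasis.repr_self bf j0, LinearIsometryEquiv.symm_apply_apply]
  · rw [LinearIsometryEquiv.trans_apply, ← hbe1, ← hbf1, OrthonormalBasis.repr_self,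
      ← OrthonormalBasis.repr_self bf j1, LinearIsometryEquiv.symm_apply_apply]

end LSH

namespace LSH

section Gsec

variable {E : Type*} [NormedAddCommGroup E] [InnerProductSpace ℝ E]
  [MeasurableSpace E] [BorelSpace E] [FiniteDimensional ℝ E]
  (μ : Measure E) [IsProbabilityMeasure μ]
  (hsupp : μ (Metric.sphere (0 : E) 1) = 1)
  (hrot : ∀ O : E ≃ₗᵢ[ℝ] E, Measure.map O μ = μ)
  (hn : 2 ≤ Module.finrank ℝ E)
  {e0 e1 : E} (he0 : ⟪e0, e0⟫ = (1 : ℝ)) (he1 : ⟪e1, e1⟫ = (1 : ℝ))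
  (he01 : ⟪e0, e1⟫ = (0 : ℝ))

include hrot hn in
/-- Frame-independence: the measure of the wedge only depends on the coordinates. -/
lemma measure_Dset_frame {u1 u2 f1 f2 : E}
    (h1 : ⟪u1, u1⟫ = (1 : ℝ)) (h2 : ⟪u2, u2⟫ = (1 : ℝ)) (h12 : ⟪u1, u2⟫ = (0 : ℝ))
    (g1 : ⟪f1, f1⟫ = (1 : ℝ)) (g2 : ⟪f2, f2⟫ = (1 : ℝ)) (g12 : ⟪f1, f2⟫ = (0 : ℝ))
    (c s : ℝ) :
    μ (Dset u1 (c • u1 + s • u2)) = μ (Dset f1 (c • f1 + s • f2)) := by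
  obtain ⟨O, hO1, hO2⟩ := exists_isometryEquiv_pair h1 h2 h12 g1 g2 g12 hn
  have := measure_Dset_map μ hrot O u1 (c • u1 + s • u2)
  rw [hO1, map_add, LinearIsometryEquiv.map_smul, LinearIsometryEquiv.map_smul,
    hO1, hO2] at this
  exact this.symm

/-- Canonical unit vector at angle `t`. -/
noncomputable def vth (e0 e1 : E) (t : ℝ) : E := Real.cos t • e0 + Real.sin t • e1

/-- The wedge measure as a function of the angle. -/
noncomputable def Gfun (μ : Measure E) (e0 e1 : E) : ℝ → ℝ≥0∞ :=
  fun t => μ (Dset e0 (vth e0 e1 t))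

include hrot hn he0 he1 he01 in
lemma Gfun_pair {u1 u2 : E}
    (h1 : ⟪u1, u1⟫ = (1 : ℝ)) (h2 : ⟪u2, u2⟫ = (1 : ℝ)) (h12 : ⟪u1, u2⟫ = (0 : ℝ))
    (t : ℝ) :
    μ (Dset u1 (Real.cos t • u1 + Real.sin t • u2)) = Gfun μ e0 e1 t :=
  measure_Dset_frame μ hrot hn h1 h2 h12 he0 he1 he01 _ _

lemma vth_zero : vth e0 e1 0 = e0 := by simp [vth]

lemma vth_pi : vth e0 e1 π = -e0 := by simp [vth]

include he0 he1 he01 in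
lemma vth_self_inner (t : ℝ) : ⟪vth e0 e1 t, vth e0 e1 t⟫ = (1 : ℝ) := by
  have h10 : ⟪e1, e0⟫ = (0 : ℝ) := by rw [real_inner_comm]; exact he01
  simp only [vth, inner_add_left, inner_add_right, real_inner_smul_left,
    real_inner_smul_right, he0, he1, he01, h10]
  linear_combination Real.sin_sq_add_cos_sq t

lemma Dset_self (u : E) : Dset u u = ∅ := by
  have h : Aset u u = Set.univ := by ext x; simp [Aset]
  rw [Dset, h, Set.compl_univ]

include he0 in
lemma Gfun_zero : Gfun μ e0 e1 0 = 0 := by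
  rw [Gfun, vth_zero, Dset_self]
  simp

lemma Aset_neg (u : E) : Aset u (-u) = {x : E | ⟪x, u⟫ = (0 : ℝ)} := by
  ext x
  simp only [Aset, Set.mem_setOf_eq, inner_neg_right]
  exact sgn_eq_sgn_neg_iff _

include hsupp hrot he0 in
lemma Gfun_pi : Gfun μ e0 e1 π = 1 := by
  have he0ne : e0 ≠ 0 := by
    intro h
    rw [h, inner_zero_left] at he0
    norm_num at he0
  rw [Gfun, vth_pi, Dset, measure_compl (measurableSet_Aset _ _) (measure_ne_top μ _),
    Aset_neg, null_hyperplane μ hsupp hrot e0 he0ne, measure_univ, tsub_zero]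

lemma sgn_eq_sgn_neg_right_iff (a b : ℝ) (hb : b ≠ 0) :
    sgn a = sgn (-b) ↔ ¬ (sgn a = sgn b) := by
  unfold sgn
  rcases lt_or_gt_of_ne hb with h | h
  · rw [if_pos (by linarith : (0:ℝ) ≤ -b), if_neg (by linarith : ¬ (0:ℝ) ≤ b)]
    by_cases ha : 0 ≤ a
    · rw [if_pos ha]; norm_num
    · rw [if_neg ha]; norm_num
  · rw [if_neg (by linarith : ¬ (0:ℝ) ≤ -b), if_pos (by linarith : (0:ℝ) ≤ b)]
    by_cases ha : 0 ≤ a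
    · rw [if_pos ha]; norm_num
    · rw [if_neg ha]; norm_num

include hsupp hrot in
lemma measure_Dset_neg_right (u v : E) (hv : v ≠ 0) :
    μ (Dset u (-v)) = 1 - μ (Dset u v) := by
  have hnull : μ {x : E | ⟪x, v⟫ = (0 : ℝ)} = 0 := null_hyperplane μ hsupp hrot v hv
  have key : ∀ x : E, ⟪x, v⟫ ≠ (0 : ℝ) → (x ∈ Dset u (-v) ↔ x ∈ Aset u v) := by
    intro x hx
    simp only [Dset, Aset, Set.mem_compl_iff, Set.mem_setOf_eq, inner_neg_right]
    rw [sgn_eq_sgn_neg_right_iff _ _ hx, not_not]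
  have hae : Dset u (-v) =ᵐ[μ] Aset u v := by
    apply MeasureTheory.ae_eq_set.mpr
    constructor <;> refine measure_mono_null ?_ hnull
    · rintro x ⟨hx1, hx2⟩
      by_contra hx
      exact hx2 ((key x hx).mp hx1)
    · rintro x ⟨hx1, hx2⟩
      by_contra hx
      exact hx2 ((key x hx).mpr hx1)
  rw [measure_congr hae, measure_Aset_compl]

end Gsec

end LSH

namespace LSH

section Gsec2

variable {E : Type*} [NormedAddCommGroup E] [InnerProductSpace ℝ E]
  [MeasurableSpace E] [BorelSpace E] [FiniteDimensional ℝ E]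
  (μ : Measure E) [IsProbabilityMeasure μ]
  (hsupp : μ (Metric.sphere (0 : E) 1) = 1)
  (hrot : ∀ O : E ≃ₗᵢ[ℝ] E, Measure.map O μ = μ)
  (hn : 2 ≤ Module.finrank ℝ E)
  {e0 e1 : E} (he0 : ⟪e0, e0⟫ = (1 : ℝ)) (he1 : ⟪e1, e1⟫ = (1 : ℝ))
  (he01 : ⟪e0, e1⟫ = (0 : ℝ))

include hsupp hrot hn he0 he1 he01 in
lemma Gfun_compl (t : ℝ) : Gfun μ e0 e1 (π - t) = 1 - Gfun μ e0 e1 t := by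
  have hvne : vth e0 e1 t ≠ 0 := by
    intro h
    have := vth_self_inner he0 he1 he01 t
    rw [h, inner_zero_left] at this
    norm_num at this
  have hstep2 : μ (Dset e0 (-(vth e0 e1 t))) = 1 - Gfun μ e0 e1 t :=
    measure_Dset_neg_right μ hsupp hrot e0 (vth e0 e1 t) hvne
  have hne1 : ⟪-e1, -e1⟫ = (1 : ℝ) := by rw [inner_neg_neg]; exact he1
  have hne01 : ⟪e0, -e1⟫ = (0 : ℝ) := by rw [inner_neg_right, he01, neg_zero]
  have hstep1 := Gfun_pair μ hrot hn he0 he1 he01 he0 hne1 hne01 (π - t)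
  have hvec : Real.cos (π - t) • e0 + Real.sin (π - t) • (-e1) = -(vth e0 e1 t) := by
    rw [Real.cos_pi_sub, Real.sin_pi_sub, vth]
    module
  rw [hvec] at hstep1
  rw [← hstep1, hstep2]

/-- The cone-splitting lemma. -/
lemma Dset_split {u v' w' : E} {a b : ℝ} (ha : 0 < a) (hb : 0 < b)
    (hv : v' = a • u + b • w') :
    Dset u w' = Dset u v' ∪ Dset v' w' ∧ Disjoint (Dset u v') (Dset v' w') := by
  have hB : ∀ x : E, (⟪x, v'⟫ : ℝ) = a * ⟪x, u⟫ + b * ⟪x, w'⟫ := by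
    intro x
    rw [hv, inner_add_right, real_inner_smul_right, real_inner_smul_right]
  have hdisj : Disjoint (Dset u v') (Dset v' w') := by
    rw [Set.disjoint_left]
    intro x hx1 hx2
    simp only [Dset, Aset, Set.mem_compl_iff, Set.mem_setOf_eq, sgn_eq_sgn_iff] at hx1 hx2
    have hBx := hB x
    by_cases h : (0 : ℝ) ≤ ⟪x, v'⟫
    · have hA : ¬ (0 : ℝ) ≤ ⟪x, u⟫ := fun hc => hx1 ⟨fun _ => h, fun _ => hc⟩
      have hC : ¬ (0 : ℝ) ≤ ⟪x, w'⟫ := fun hc => hx2 ⟨fun _ => hc, fun _ => h⟩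
      push_neg at hA hC
      nlinarith
    · have hA : (0 : ℝ) ≤ ⟪x, u⟫ := by
        by_contra hA
        exact hx1 ⟨fun hp => absurd hp hA, fun hq => absurd hq h⟩
      have hC : (0 : ℝ) ≤ ⟪x, w'⟫ := by
        by_contra hC
        exact hx2 ⟨fun hp => absurd hp h, fun hq => absurd hq hC⟩
      exact h (by nlinarith)
  refine ⟨?_, hdisj⟩
  ext x
  simp only [Dset, Aset, Set.mem_union, Set.mem_compl_iff, Set.mem_setOf_eq, sgn_eq_sgn_iff]
  have hBx := hB x
  constructor
  · intro h
    by_cases h2 : ((0 : ℝ) ≤ ⟪x, u⟫ ↔ (0 : ℝ) ≤ ⟪x, v'⟫)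
    · right; intro hc; exact h (h2.trans hc)
    · left; exact h2
  · intro h hc
    by_cases hA : (0 : ℝ) ≤ ⟪x, u⟫
    · have hC : (0 : ℝ) ≤ ⟪x, w'⟫ := hc.mp hA
      have hBpos : (0 : ℝ) ≤ ⟪x, v'⟫ := by nlinarith
      rcases h with h | h
      · exact h ⟨fun _ => hBpos, fun _ => hA⟩
      · exact h ⟨fun _ => hC, fun _ => hBpos⟩
    · have hC : ¬ (0 : ℝ) ≤ ⟪x, w'⟫ := fun hcc => hA (hc.mpr hcc)
      have hBneg : ¬ (0 : ℝ) ≤ ⟪x, v'⟫ := by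
        push_neg at hA hC ⊢
        nlinarith
      rcases h with h | h
      · exact h ⟨fun hh => absurd hh hA, fun hh => absurd hh hBneg⟩
      · exact h ⟨fun hh => absurd hh hBneg, fun hh => absurd hh hC⟩

end Gsec2

end LSH

namespace LSH

section Gsec3

variable {E : Type*} [NormedAddCommGroup E] [InnerProductSpace ℝ E]
  [MeasurableSpace E] [BorelSpace E] [FiniteDimensional ℝ E]
  (μ : Measure E) [IsProbabilityMeasure μ]
  (hsupp : μ (Metric.sphere (0 : E) 1) = 1)
  (hrot : ∀ O : E ≃ₗᵢ[ℝ] E, Measure.map O μ = μ)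
  (hn : 2 ≤ Module.finrank ℝ E)
  {e0 e1 : E} (he0 : ⟪e0, e0⟫ = (1 : ℝ)) (he1 : ⟪e1, e1⟫ = (1 : ℝ))
  (he01 : ⟪e0, e1⟫ = (0 : ℝ))

include hrot hn he0 he1 he01 in
lemma Gfun_add {a b : ℝ} (ha : 0 < a) (hb : 0 < b) (hab : a + b < π) :
    Gfun μ e0 e1 (a + b) = Gfun μ e0 e1 a + Gfun μ e0 e1 b := by
  have h10 : ⟪e1, e0⟫ = (0 : ℝ) := by rw [real_inner_comm]; exact he01
  have hsa : 0 < Real.sin a := Real.sin_pos_of_pos_of_lt_pi ha (by linarith)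
  have hsb : 0 < Real.sin b := Real.sin_pos_of_pos_of_lt_pi hb (by linarith)
  have hsab : 0 < Real.sin (a + b) := Real.sin_pos_of_pos_of_lt_pi (by linarith) hab
  have hv : vth e0 e1 a = (Real.sin b / Real.sin (a + b)) • e0 +
      (Real.sin a / Real.sin (a + b)) • vth e0 e1 (a + b) := by
    rw [vth, vth]
    match_scalars
    · field_simp
      rw [Real.sin_add, Real.cos_add]
      linear_combination Real.sin b * Real.sin_sq_add_cos_sq a
    · field_simp
  have hsplit := Dset_split (div_pos hsb hsab) (div_pos hsa hsab) hv
  have hG : Gfun μ e0 e1 (a + b) = Gfun μ e0 e1 a + μ (Dset (vth e0 e1 a) (vth e0 e1 (a + b))) := by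
    rw [Gfun, hsplit.1, measure_union hsplit.2 (measurableSet_Dset _ _)]
    rfl
  rw [hG]
  congr 1
  -- second piece equals `Gfun b` via the rotated frame
  set u2 : E := -Real.sin a • e0 + Real.cos a • e1 with hu2def
  have hva : ⟪vth e0 e1 a, vth e0 e1 a⟫ = (1 : ℝ) := vth_self_inner he0 he1 he01 a
  have hu2 : ⟪u2, u2⟫ = (1 : ℝ) := by
    simp only [hu2def, inner_add_left, inner_add_right, real_inner_smul_left,
      real_inner_smul_right, he0, he1, he01, h10]
    linear_combination Real.sin_sq_add_cos_sq a
  have hperp : ⟪vth e0 e1 a, u2⟫ = (0 : ℝ) := by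
    simp only [hu2def, vth, inner_add_left, inner_add_right, real_inner_smul_left,
      real_inner_smul_right, he0, he1, he01, h10]
    ring
  have hw : vth e0 e1 (a + b) = Real.cos b • vth e0 e1 a + Real.sin b • u2 := by
    rw [vth, vth, hu2def]
    match_scalars
    · rw [Real.cos_add]; ring
    · rw [Real.sin_add]; ring
  rw [hw]
  exact Gfun_pair μ hrot hn he0 he1 he01 hva hu2 hperp b

end Gsec3

end LSH

namespace LSH

section Gsec4

variable {E : Type*} [NormedAddCommGroup E] [InnerProductSpace ℝ E]
  [MeasurableSpace E] [BorelSpace E] [FiniteDimensional ℝ E]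
  (μ : Measure E) [IsProbabilityMeasure μ]
  (hsupp : μ (Metric.sphere (0 : E) 1) = 1)
  (hrot : ∀ O : E ≃ₗᵢ[ℝ] E, Measure.map O μ = μ)
  (hn : 2 ≤ Module.finrank ℝ E)
  {e0 e1 : E} (he0 : ⟪e0, e0⟫ = (1 : ℝ)) (he1 : ⟪e1, e1⟫ = (1 : ℝ))
  (he01 : ⟪e0, e1⟫ = (0 : ℝ))

/-- Real-valued wedge measure. -/
noncomputable def gfun (μ : Measure E) (e0 e1 : E) : ℝ → ℝ :=
  fun t => (Gfun μ e0 e1 t).toReal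

lemma Gfun_ne_top (t : ℝ) : Gfun μ e0 e1 t ≠ ⊤ := measure_ne_top μ _

lemma Gfun_le_one (t : ℝ) : Gfun μ e0 e1 t ≤ 1 := prob_le_one

lemma gfun_nonneg (t : ℝ) : 0 ≤ gfun μ e0 e1 t := ENNReal.toReal_nonneg

lemma gfun_le_one (t : ℝ) : gfun μ e0 e1 t ≤ 1 := by
  have h := ENNReal.toReal_mono ENNReal.one_ne_top (prob_le_one (μ := μ) (s := Dset e0 (vth e0 e1 t)))
  rwa [ENNReal.toReal_one] at h

include he0 in
lemma gfun_zero : gfun μ e0 e1 0 = 0 := by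
  rw [gfun, Gfun_zero μ he0, ENNReal.toReal_zero]

include hsupp hrot he0 in
lemma gfun_pi : gfun μ e0 e1 π = 1 := by
  rw [gfun, Gfun_pi μ hsupp hrot he0, ENNReal.toReal_one]

include hsupp hrot hn he0 he1 he01 in
lemma gfun_compl (t : ℝ) : gfun μ e0 e1 (π - t) = 1 - gfun μ e0 e1 t := by
  rw [gfun, Gfun_compl μ hsupp hrot hn he0 he1 he01 t,
    ENNReal.toReal_sub_of_le (Gfun_le_one μ t) ENNReal.one_ne_top, ENNReal.toReal_one]
  rfl

include hsupp hrot hn he0 he1 he01 in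
lemma gfun_add {a b : ℝ} (ha : 0 < a) (hb : 0 < b) (hab : a + b ≤ π) :
    gfun μ e0 e1 (a + b) = gfun μ e0 e1 a + gfun μ e0 e1 b := by
  rcases lt_or_eq_of_le hab with h | h
  · rw [gfun, Gfun_add μ hrot hn he0 he1 he01 ha hb h,
      ENNReal.toReal_add (Gfun_ne_top μ a) (Gfun_ne_top μ b)]
    rfl
  · have hb' : b = π - a := by linarith
    rw [h, gfun_pi μ hsupp hrot he0, hb', gfun_compl μ hsupp hrot hn he0 he1 he01 a]
    ring

include hsupp hrot hn he0 he1 he01 in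
lemma gfun_mono {s t : ℝ} (hs : 0 < s) (hst : s ≤ t) (ht : t ≤ π) :
    gfun μ e0 e1 s ≤ gfun μ e0 e1 t := by
  rcases eq_or_lt_of_le hst with h | h
  · rw [h]
  · have hadd := gfun_add μ hsupp hrot hn he0 he1 he01 hs (by linarith : (0:ℝ) < t - s)
      (by linarith : s + (t - s) ≤ π)
    rw [show s + (t - s) = t by ring] at hadd
    have := gfun_nonneg μ (e0 := e0) (e1 := e1) (t - s)
    linarith

include hsupp hrot hn he0 he1 he01 in
lemma gfun_nat (n : ℕ) (hn1 : 1 ≤ n) :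
    ∀ m : ℕ, m ≤ n → gfun μ e0 e1 (m * (π / n)) = m * gfun μ e0 e1 (π / n) := by
  have hnpos : (0 : ℝ) < n := by exact_mod_cast hn1
  have hπn : 0 < π / n := div_pos Real.pi_pos hnpos
  intro m
  induction m with
  | zero => intro _; simp [gfun_zero μ he0]
  | succ m ih =>
    intro hm
    have hm' : m ≤ n := by omega
    rcases Nat.eq_zero_or_pos m with rfl | hmpos
    · norm_num
    have hmr : (0 : ℝ) < m := by exact_mod_cast hmpos
    have hcast : ((m + 1 : ℕ) : ℝ) * (π / n) = (m : ℝ) * (π / n) + π / n := by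
      push_cast; ring
    have hsum : (m : ℝ) * (π / n) + π / n ≤ π := by
      have h1 : ((m : ℝ) + 1) ≤ n := by exact_mod_cast hm
      have h2 : ((m : ℝ) + 1) * (π / n) ≤ (n : ℝ) * (π / n) :=
        mul_le_mul_of_nonneg_right h1 (le_of_lt hπn)
      have h3 : (n : ℝ) * (π / n) = π := by field_simp
      nlinarith
    rw [hcast, gfun_add μ hsupp hrot hn he0 he1 he01 (mul_pos hmr hπn) hπn hsum, ih hm']
    push_cast; ring

include hsupp hrot hn he0 he1 he01 in
lemma gfun_frac (n : ℕ) (hn1 : 1 ≤ n) : gfun μ e0 e1 (π / n) = 1 / n := by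
  have hnpos : (0 : ℝ) < n := by exact_mod_cast hn1
  have h := gfun_nat μ hsupp hrot hn he0 he1 he01 n hn1 n le_rfl
  rw [show (n : ℝ) * (π / n) = π by field_simp] at h
  rw [gfun_pi μ hsupp hrot he0] at h
  field_simp
  linarith [h]

include hsupp hrot hn he0 he1 he01 in
lemma gfun_eval {θ : ℝ} (h0 : 0 ≤ θ) (hπ : θ ≤ π) : gfun μ e0 e1 θ = θ / π := by
  have hπpos := Real.pi_pos
  suffices h : ∀ n : ℕ, 1 ≤ n → |gfun μ e0 e1 θ - θ / π| ≤ 1 / n by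
    by_contra hne
    have hd : 0 < |gfun μ e0 e1 θ - θ / π| := abs_pos.mpr (sub_ne_zero.mpr hne)
    obtain ⟨n, hng⟩ := exists_nat_gt (1 / |gfun μ e0 e1 θ - θ / π|)
    have hnpos : (0 : ℝ) < n := lt_trans (by positivity) hng
    have hn1 : 1 ≤ n := by exact_mod_cast Nat.one_le_iff_ne_zero.mpr (by
      intro hz; rw [hz] at hnpos; norm_num at hnpos)
    have hlt : 1 / (n : ℝ) < |gfun μ e0 e1 θ - θ / π| := by
      rw [div_lt_iff₀ hnpos]
      rw [div_lt_iff₀ hd] at hng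
      linarith
    linarith [h n hn1]
  intro n hn1
  have hnpos : (0 : ℝ) < n := by exact_mod_cast hn1
  have hπn : 0 < π / n := div_pos hπpos hnpos
  set m := Nat.floor ((n : ℝ) * θ / π) with hmdef
  have hnθ : 0 ≤ (n : ℝ) * θ / π := by positivity
  have hfl : (m : ℝ) ≤ (n : ℝ) * θ / π := Nat.floor_le hnθ
  have hfu : (n : ℝ) * θ / π < m + 1 := Nat.lt_floor_add_one _
  have hmn : m ≤ n := by
    have hle : (n : ℝ) * θ / π ≤ n := by
      rw [div_le_iff₀ hπpos]
      nlinarith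
    have h2 := Nat.floor_le_of_le hle
    simpa using h2
  have hfl' : (m : ℝ) * π ≤ (n : ℝ) * θ := by
    rw [le_div_iff₀ hπpos] at hfl
    linarith
  have hfu' : (n : ℝ) * θ < ((m : ℝ) + 1) * π := by
    rw [div_lt_iff₀ hπpos] at hfu
    linarith
  have hlow : (m : ℝ) / n ≤ gfun μ e0 e1 θ := by
    rcases Nat.eq_zero_or_pos m with hm0 | hmpos
    · have hg0 := gfun_nonneg μ (e0 := e0) (e1 := e1) θ
      rw [hm0]
      simpa using hg0
    · have hmr : (0 : ℝ) < m := by exact_mod_cast hmpos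
      have hmθ : (m : ℝ) * (π / n) ≤ θ := by
        rw [mul_div_assoc', div_le_iff₀ hnpos]
        nlinarith
      have hg := gfun_mono μ hsupp hrot hn he0 he1 he01 (mul_pos hmr hπn) hmθ hπ
      rw [gfun_nat μ hsupp hrot hn he0 he1 he01 n hn1 m hmn,
        gfun_frac μ hsupp hrot hn he0 he1 he01 n hn1] at hg
      calc (m : ℝ) / n = (m : ℝ) * (1 / n) := by ring
        _ ≤ _ := hg
  have hup : gfun μ e0 e1 θ ≤ ((m : ℝ) + 1) / n := by
    by_cases hc : m + 1 ≤ n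
    · have hθm : θ ≤ ((m : ℝ) + 1) * (π / n) := by
        rw [mul_div_assoc', le_div_iff₀ hnpos]
        nlinarith
      have hle2 : ((m : ℝ) + 1) * (π / n) ≤ π := by
        have h1 : ((m : ℝ) + 1) ≤ n := by exact_mod_cast hc
        have h2 := mul_le_mul_of_nonneg_right h1 (le_of_lt hπn)
        have h3 : (n : ℝ) * (π / n) = π := by field_simp
        nlinarith
      have hg : gfun μ e0 e1 θ ≤ gfun μ e0 e1 (((m : ℝ) + 1) * (π / n)) := by
        rcases eq_or_lt_of_le h0 with h00 | h00
        · rw [← h00, gfun_zero μ he0]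
          exact gfun_nonneg μ _
        · exact gfun_mono μ hsupp hrot hn he0 he1 he01 h00 hθm hle2
      have hnat := gfun_nat μ hsupp hrot hn he0 he1 he01 n hn1 (m + 1) hc
      rw [show (((m : ℕ) + 1 : ℕ) : ℝ) = (m : ℝ) + 1 by push_cast; ring] at hnat
      rw [hnat, gfun_frac μ hsupp hrot hn he0 he1 he01 n hn1] at hg
      calc gfun μ e0 e1 θ ≤ ((m : ℝ) + 1) * (1 / n) := hg
        _ = ((m : ℝ) + 1) / n := by ring
    · have hmn' : m = n := by omega
      have h1 : gfun μ e0 e1 θ ≤ 1 := gfun_le_one μ θ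
      have h2 : (1 : ℝ) ≤ ((m : ℝ) + 1) / n := by
        rw [hmn', le_div_iff₀ hnpos]
        linarith
      linarith
  have hθl : (m : ℝ) / n ≤ θ / π := by
    rw [div_le_div_iff₀ hnpos hπpos]
    linarith
  have hθu : θ / π ≤ ((m : ℝ) + 1) / n := by
    rw [div_le_div_iff₀ hπpos hnpos]
    nlinarith
  have hdiff : ((m : ℝ) + 1) / n - (m : ℝ) / n = 1 / n := by ring
  rw [abs_le]
  constructor <;> linarith

end Gsec4

end LSH

open scoped RealInnerProductSpace

/-- Random hyperplane hashing: for `x` uniform (rotation-invariant probability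
measure supported on the unit sphere) in `ℝ^d`, `d ≥ 2`, the probability that
`sgn ⟪x, wₘ⟫ = sgn ⟪x, wₙ⟫` equals `1 - θ/π` where `θ` is the angle between
the nonzero vectors `wₘ` and `wₙ`. -/
theorem lsh_collision_prob
    (d : ℕ) (hd : 2 ≤ d)
    (wm wn : EuclideanSpace ℝ (Fin d)) (hwm : wm ≠ 0) (hwn : wn ≠ 0)
    (μ : Measure (EuclideanSpace ℝ (Fin d))) [IsProbabilityMeasure μ]
    (hsupp : μ (Metric.sphere (0 : EuclideanSpace ℝ (Fin d)) 1) = 1)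
    (hrot : ∀ O : EuclideanSpace ℝ (Fin d) ≃ₗᵢ[ℝ] EuclideanSpace ℝ (Fin d),
      Measure.map O μ = μ)
    (θ : ℝ) (hθ : θ = Real.arccos ((inner ℝ wm wn : ℝ) / (‖wm‖ * ‖wn‖))) :
    μ {x | sgn (inner ℝ x wm : ℝ) = sgn (inner ℝ x wn : ℝ)}
      = ENNReal.ofReal (1 - θ / π) := by
  classical
  open LSH in
  have hn : 2 ≤ Module.finrank ℝ (EuclideanSpace ℝ (Fin d)) := by
    rw [finrank_euclideanSpace_fin]; exact hd
  have hm0 : ‖wm‖ ≠ 0 := norm_ne_zero_iff.mpr hwm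
  have hn0 : ‖wn‖ ≠ 0 := norm_ne_zero_iff.mpr hwn
  set u : EuclideanSpace ℝ (Fin d) := ‖wm‖⁻¹ • wm with hudef
  set v : EuclideanSpace ℝ (Fin d) := ‖wn‖⁻¹ • wn with hvdef
  have hun : ‖u‖ = 1 := by
    rw [hudef, norm_smul, norm_inv, norm_norm, inv_mul_cancel₀ hm0]
  have hvn : ‖v‖ = 1 := by
    rw [hvdef, norm_smul, norm_inv, norm_norm, inv_mul_cancel₀ hn0]
  have hune : u ≠ 0 := by intro h; rw [h, norm_zero] at hun; norm_num at hun
  have huu : ⟪u, u⟫ = (1 : ℝ) := by rw [real_inner_self_eq_norm_mul_norm, hun]; norm_num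
  have hvv : ⟪v, v⟫ = (1 : ℝ) := by rw [real_inner_self_eq_norm_mul_norm, hvn]; norm_num
  have hsetrw : {x : EuclideanSpace ℝ (Fin d) | sgn (inner ℝ x wm : ℝ) = sgn (inner ℝ x wn : ℝ)}
      = LSH.Aset u v := by
    ext x
    simp only [LSH.Aset, Set.mem_setOf_eq, hudef, hvdef, real_inner_smul_right]
    rw [sgn_mul_pos _ _ (inv_pos.mpr (lt_of_le_of_ne (norm_nonneg wm) (Ne.symm hm0))),
      sgn_mul_pos _ _ (inv_pos.mpr (lt_of_le_of_ne (norm_nonneg wn) (Ne.symm hn0)))]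
  have ht : (⟪u, v⟫ : ℝ) = (inner ℝ wm wn : ℝ) / (‖wm‖ * ‖wn‖) := by
    rw [hudef, hvdef, real_inner_smul_left, real_inner_smul_right]
    field_simp
    try ring
  have hθ' : θ = Real.arccos ⟪u, v⟫ := by rw [hθ, ht]
  have htabs : |(⟪u, v⟫ : ℝ)| ≤ 1 := by
    have h := abs_real_inner_le_norm u v
    rwa [hun, hvn, one_mul] at h
  obtain ⟨ht1, ht2⟩ := abs_le.mp htabs
  have hθ0 : 0 ≤ θ := hθ' ▸ Real.arccos_nonneg _
  have hθπ : θ ≤ π := hθ' ▸ Real.arccos_le_pi _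
  have hcos : Real.cos θ = ⟪u, v⟫ := by rw [hθ']; exact Real.cos_arccos ht1 ht2
  rw [hsetrw, LSH.measure_Aset_compl]
  suffices hDset : μ (LSH.Dset u v) = ENNReal.ofReal (θ / π) by
    rw [hDset, ENNReal.ofReal_sub 1 (div_nonneg hθ0 (le_of_lt Real.pi_pos)),
      ENNReal.ofReal_one]
  by_cases hone : (⟪u, v⟫ : ℝ) = 1
  · have huv : u = v := (inner_eq_one_iff_of_norm_eq_one hun hvn).mp hone
    have hθz : θ = 0 := by rw [hθ', hone, Real.arccos_one]
    rw [← huv, LSH.Dset_self, hθz, measure_empty, zero_div, ENNReal.ofReal_zero]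
  by_cases hmone : (⟪u, v⟫ : ℝ) = -1
  · have humv : u = -v := by
      have hne : ⟪u, -v⟫ = (1 : ℝ) := by rw [inner_neg_right, hmone]; norm_num
      exact (inner_eq_one_iff_of_norm_eq_one hun (by rwa [norm_neg] : ‖-v‖ = 1)).mp hne
    have hvmu : v = -u := by rw [humv, neg_neg]
    have hθp : θ = π := by rw [hθ', hmone, Real.arccos_neg_one]
    rw [hvmu, hθp, div_self (ne_of_gt Real.pi_pos), ENNReal.ofReal_one]
    rw [LSH.Dset, measure_compl (LSH.measurableSet_Aset _ _) (measure_ne_top μ _),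
      LSH.Aset_neg, LSH.null_hyperplane μ hsupp hrot u hune, measure_univ, tsub_zero]
  · set t : ℝ := ⟪u, v⟫ with htdef
    set s : ℝ := Real.sqrt (1 - t ^ 2) with hsdef
    have ht1' : -1 < t := lt_of_le_of_ne ht1 (Ne.symm hmone)
    have ht2' : t < 1 := lt_of_le_of_ne ht2 hone
    have hspos : 0 < s := Real.sqrt_pos.mpr (by nlinarith)
    have hs2 : s ^ 2 = 1 - t ^ 2 := Real.sq_sqrt (by nlinarith)
    set e2 : EuclideanSpace ℝ (Fin d) := s⁻¹ • (v - t • u) with he2def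
    have hvu : ⟪v, u⟫ = t := by rw [real_inner_comm]
    have hsub : ⟪v - t • u, v - t • u⟫ = (1 : ℝ) - t ^ 2 := by
      simp only [inner_sub_left, inner_sub_right, real_inner_smul_left,
        real_inner_smul_right, huu, hvv, hvu, htdef]
      ring
    have he2e2 : ⟪e2, e2⟫ = (1 : ℝ) := by
      rw [he2def, real_inner_smul_left, real_inner_smul_right, hsub]
      rw [← hs2]
      field_simp
      try ring
    have hue2 : ⟪u, e2⟫ = (0 : ℝ) := by
      simp only [he2def, real_inner_smul_right, inner_sub_right, huu]
      rw [← htdef]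
      ring
    have hsin : Real.sin θ = s := by
      rw [hθ', Real.sin_arccos, hsdef, htdef]
    have hvdec : LSH.vth u e2 θ = v := by
      show Real.cos θ • u + Real.sin θ • e2 = v
      have hsne : s ≠ 0 := ne_of_gt hspos
      rw [hcos, hsin, he2def]
      match_scalars <;> (field_simp; try ring)
    have hval : LSH.gfun μ u e2 θ = θ / π :=
      LSH.gfun_eval μ hsupp hrot hn huu he2e2 hue2 hθ0 hθπ
    have hfin : LSH.Gfun μ u e2 θ ≠ ⊤ := LSH.Gfun_ne_top μ θ
    have : μ (LSH.Dset u v) = LSH.Gfun μ u e2 θ := by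
      rw [LSH.Gfun, hvdec]
    rw [this, ← hval, LSH.gfun, ENNReal.ofReal_toReal hfin]
end

section
/- For two nonzero vectors w_m, w_n in R^d with angle θ ∈ [0, π] between them, the expectation E_x[sgn(⟨x, w_m⟩)·sgn(⟨x, w_n⟩)], where x is uniform on the unit sphere in R^d, equals 1 − 2θ/π. -/
open MeasureTheory Real
open scoped RealInnerProductSpace ENNReal

lemma sgn_eq_one_or (x : ℝ) : sgn x = 1 ∨ sgn x = -1 := by
  unfold sgn; split <;> simp

lemma sgn_mul_pos {c : ℝ} (hc : 0 < c) (x : ℝ) : sgn (c * x) = sgn x := by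
  unfold sgn
  rcases lt_trichotomy x 0 with h | h | h
  · rw [if_neg (by nlinarith), if_neg (by linarith)]
  · simp [h]
  · rw [if_pos (by nlinarith), if_pos (by linarith)]

lemma sgn_mul_of_ne {p q : ℝ} (h : sgn p ≠ sgn q) : sgn p * sgn q = -1 := by
  rcases sgn_eq_one_or p with hp | hp <;> rcases sgn_eq_one_or q with hq | hq
  · exact absurd (hp.trans hq.symm) h
  · rw [hp, hq]; norm_num
  · rw [hp, hq]; norm_num
  · exact absurd (hp.trans hq.symm) h

lemma sgn_mul_of_eq {p q : ℝ} (h : sgn p = sgn q) : sgn p * sgn q = 1 := by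
  rw [h]
  rcases sgn_eq_one_or q with hq | hq <;> rw [hq] <;> norm_num

section Rot
variable {E : Type*} [NormedAddCommGroup E] [InnerProductSpace ℝ E]

noncomputable def rotAux (e f : E) (t : ℝ) (x : E) : E :=
  x + (Real.cos t * ⟪x, e⟫ - Real.sin t * ⟪x, f⟫ - ⟪x, e⟫) • e
    + (Real.sin t * ⟪x, e⟫ + Real.cos t * ⟪x, f⟫ - ⟪x, f⟫) • f

variable {e f : E} (he : ‖e‖ = 1) (hf : ‖f‖ = 1) (hef : ⟪e, f⟫ = 0)

lemma inner_self_one (h : ‖e‖ = 1) : ⟪e, e⟫ = 1 := by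
  rw [real_inner_self_eq_norm_sq, h]; norm_num

include he hf hef

lemma inner_rotAux_e (t : ℝ) (x : E) :
    ⟪rotAux e f t x, e⟫ = Real.cos t * ⟪x, e⟫ - Real.sin t * ⟪x, f⟫ := by
  have hfe : ⟪f, e⟫ = 0 := by rw [real_inner_comm]; exact hef
  simp [rotAux, inner_add_left, real_inner_smul_left, inner_self_one he, hfe, hef, he]

lemma inner_rotAux_f (t : ℝ) (x : E) :
    ⟪rotAux e f t x, f⟫ = Real.sin t * ⟪x, e⟫ + Real.cos t * ⟪x, f⟫ := by
  have hfe : ⟪f, e⟫ = 0 := by rw [real_inner_comm]; exact hef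
  simp [rotAux, inner_add_left, real_inner_smul_left, inner_self_one hf, hfe, hef, hf]

lemma rotAux_rotAux (s t : ℝ) (x : E) :
    rotAux e f s (rotAux e f t x) = rotAux e f (s + t) x := by
  conv_lhs => rw [rotAux, inner_rotAux_e he hf hef, inner_rotAux_f he hf hef]
  conv_lhs => rw [rotAux]
  rw [rotAux]
  match_scalars <;> ring_nf <;> rw [Real.cos_add, Real.sin_add] <;> ring

omit he hf hef in
lemma rotAux_zero (x : E) : rotAux e f 0 x = x := by
  simp [rotAux]

include he hf hef in
lemma norm_rotAux (t : ℝ) (x : E) : ‖rotAux e f t x‖ = ‖x‖ := by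
  have key : ⟪rotAux e f t x, rotAux e f t x⟫ = ⟪x, x⟫ := by
    rw [rotAux]
    simp only [inner_add_add_self, inner_add_left, inner_add_right, real_inner_smul_left,
      real_inner_smul_right, inner_self_one he, inner_self_one hf, hef,
      real_inner_comm e x, real_inner_comm f x]
    have hfe : ⟪f, e⟫ = 0 := by rw [real_inner_comm]; exact hef
    rw [hfe]
    linear_combination ((⟪e,x⟫:ℝ)^2 + (⟪f,x⟫:ℝ)^2) * Real.sin_sq_add_cos_sq t
  have h1 : ‖rotAux e f t x‖ ^ 2 = ‖x‖ ^ 2 := by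
    rw [← real_inner_self_eq_norm_sq, ← real_inner_self_eq_norm_sq, key]
  have := congrArg Real.sqrt h1
  rwa [Real.sqrt_sq (norm_nonneg _), Real.sqrt_sq (norm_nonneg _)] at this

omit he hf hef in
lemma rotAux_add' (t : ℝ) (x y : E) :
    rotAux e f t (x + y) = rotAux e f t x + rotAux e f t y := by
  simp only [rotAux, inner_add_left]
  match_scalars <;> ring

omit he hf hef in
lemma rotAux_smul' (t : ℝ) (c : ℝ) (x : E) :
    rotAux e f t (c • x) = c • rotAux e f t x := by
  simp only [rotAux, real_inner_smul_left, smul_add]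
  match_scalars <;> ring

noncomputable def rot (e f : E) (he : ‖e‖ = 1) (hf : ‖f‖ = 1) (hef : ⟪e, f⟫ = 0) (t : ℝ) :
    E ≃ₗᵢ[ℝ] E where
  toLinearEquiv :=
    { toFun := rotAux e f t
      map_add' := rotAux_add' t
      map_smul' := rotAux_smul' t
      invFun := rotAux e f (-t)
      left_inv := fun x => by
        show rotAux e f (-t) (rotAux e f t x) = x
        rw [rotAux_rotAux he hf hef, neg_add_cancel, rotAux_zero]
      right_inv := fun x => by
        show rotAux e f t (rotAux e f (-t) x) = x
        rw [rotAux_rotAux he hf hef, add_neg_cancel, rotAux_zero] }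
  norm_map' := norm_rotAux he hf hef t

@[simp] lemma rot_apply (t : ℝ) (x : E) : rot e f he hf hef t x = rotAux e f t x := rfl

lemma rot_uangle (t γ : ℝ) :
    rotAux e f t (Real.cos γ • e + Real.sin γ • f)
      = Real.cos (t + γ) • e + Real.sin (t + γ) • f := by
  have h1 : ⟪Real.cos γ • e + Real.sin γ • f, e⟫ = Real.cos γ := by
    have hfe : ⟪f, e⟫ = 0 := by rw [real_inner_comm]; exact hef
    simp [inner_add_left, real_inner_smul_left, inner_self_one he, hfe, he]
  have h2 : ⟪Real.cos γ • e + Real.sin γ • f, f⟫ = Real.sin γ := by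
    simp [inner_add_left, real_inner_smul_left, inner_self_one hf, hef, hf]
  rw [rotAux, h1, h2]
  match_scalars
  · rw [Real.cos_add]; ring
  · rw [Real.sin_add]; ring

end Rot

section Zero
variable {d : ℕ} (μ : Measure (EuclideanSpace ℝ (Fin d))) [IsProbabilityMeasure μ]

local notation "E" => EuclideanSpace ℝ (Fin d)

lemma meas_inner_zero (w : EuclideanSpace ℝ (Fin d)) :
    MeasurableSet {x : EuclideanSpace ℝ (Fin d) | ⟪x, w⟫ = 0} :=
  (isClosed_eq (continuous_id.inner continuous_const) continuous_const).measurableSet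

lemma step_lemma
    (hrot : ∀ O : EuclideanSpace ℝ (Fin d) ≃ₗᵢ[ℝ] EuclideanSpace ℝ (Fin d),
      Measure.map O μ = μ)
    (e f : EuclideanSpace ℝ (Fin d)) (he : ‖e‖ = 1) (hf : ‖f‖ = 1) (hef : ⟪e, f⟫ = 0)
    (C : Set (EuclideanSpace ℝ (Fin d))) (hC : MeasurableSet C)
    (hCinv : ∀ t x, x ∈ C → rotAux e f t x ∈ C) :
    μ (C ∩ {x | ⟪x, e⟫ = 0}) = μ (C ∩ {x | ⟪x, e⟫ = 0} ∩ {x | ⟪x, f⟫ = 0}) := by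
  set v : ℝ → E := fun t => Real.cos t • e + Real.sin t • f with hv
  have hveq : ∀ t, v t = rotAux e f t e := by
    intro t
    rw [hv, rotAux, inner_self_one he, hef]
    match_scalars <;> ring
  have hinner_v : ∀ t (x : E), ⟪x, v t⟫ = Real.cos t * ⟪x, e⟫ + Real.sin t * ⟪x, f⟫ := by
    intro t x
    rw [hv]
    simp only [inner_add_right, real_inner_smul_right]
  set B : ℝ → Set E := fun t => C ∩ {x | ⟪x, v t⟫ = 0} with hB
  have measB : ∀ t, MeasurableSet (B t) := fun t => hC.inter (meas_inner_zero _)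
  set K : Set E := C ∩ {x | ⟪x, e⟫ = 0} ∩ {x | ⟪x, f⟫ = 0} with hK
  have measK : MeasurableSet K := (hC.inter (meas_inner_zero _)).inter (meas_inner_zero _)
  have hKB : ∀ t, K ⊆ B t := by
    intro t x hx
    refine ⟨hx.1.1, ?_⟩
    have h1 : ⟪x, e⟫ = 0 := hx.1.2
    have h2 : ⟪x, f⟫ = 0 := hx.2
    show ⟪x, v t⟫ = 0
    rw [hinner_v, h1, h2]; ring
  have hB0 : B 0 = C ∩ {x | ⟪x, e⟫ = 0} := by
    ext x
    have h0 : ⟪x, v 0⟫ = ⟪x, e⟫ := by rw [hinner_v]; simp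
    simp only [hB, Set.mem_inter_iff, Set.mem_setOf_eq, h0]
  have hBmeas_eq : ∀ t, μ (B t) = μ (B 0) := by
    intro t
    set O := rot e f he hf hef t with hO
    have hpre : (O : E → E) ⁻¹' (B t) = B 0 := by
      rw [hB0]
      ext x
      simp only [Set.mem_preimage, hB, Set.mem_inter_iff, Set.mem_setOf_eq]
      have hiff : ((O : E → E) x ∈ C) ↔ x ∈ C := by
        constructor
        · intro h
          have := hCinv (-t) _ h
          rwa [rot_apply, rotAux_rotAux he hf hef, neg_add_cancel, rotAux_zero] at this
        · intro h
          exact hCinv t x h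
      have hinn : ⟪(O : E → E) x, v t⟫ = ⟪x, e⟫ := by
        rw [hveq t]
        exact O.inner_map_map x e
      rw [hinn, hiff]
    calc μ (B t) = (Measure.map O μ) (B t) := by rw [hrot O]
    _ = μ ((O : E → E) ⁻¹' (B t)) := Measure.map_apply O.continuous.measurable (measB t)
    _ = μ (B 0) := by rw [hpre]
  set T : ℕ → ℝ := fun n => π / 2 / (n + 1) with hT
  have hπ : (0:ℝ) < π / 2 := by positivity
  have hTpos : ∀ n, 0 < T n := fun n => by positivity
  have hTle : ∀ n, T n ≤ π / 2 := by
    intro n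
    rw [hT]
    apply div_le_self (le_of_lt hπ)
    have : (0:ℝ) ≤ (n:ℝ) := Nat.cast_nonneg n
    linarith
  have hTinj : Function.Injective T := by
    have hanti : StrictAnti T := by
      intro m n hmn
      rw [hT]
      apply div_lt_div_of_pos_left hπ (by positivity)
      have : (m:ℝ) < n := by exact_mod_cast hmn
      linarith
    exact hanti.injective
  have hdisj : ∀ m n, m ≠ n → B (T m) ∩ B (T n) ⊆ K := by
    intro m n hmn x hx
    have h1 : ⟪x, v (T m)⟫ = 0 := hx.1.2
    have h2 : ⟪x, v (T n)⟫ = 0 := hx.2.2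
    rw [hinner_v] at h1 h2
    set a := (⟪x, e⟫ : ℝ) with hA
    set b := (⟪x, f⟫ : ℝ) with hBB
    have hs : Real.sin (T n - T m) ≠ 0 := by
      intro h
      rw [Real.sin_eq_zero_iff_of_lt_of_lt
        (by linarith [hTpos m, hTpos n, hTle m, hTle n, Real.pi_pos])
        (by linarith [hTpos m, hTpos n, hTle m, hTle n, Real.pi_pos])] at h
      exact hmn (hTinj (by linarith))
    have ha : a = 0 := by
      have key : a * Real.sin (T n - T m) = 0 := by
        rw [Real.sin_sub]
        linear_combination Real.sin (T n) * h1 - Real.sin (T m) * h2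
      exact (mul_eq_zero.mp key).resolve_right hs
    have hb : b = 0 := by
      have key : b * Real.sin (T m) = 0 := by
        rw [ha] at h1
        linear_combination h1
      have hsm : Real.sin (T m) ≠ 0 :=
        ne_of_gt (Real.sin_pos_of_pos_of_lt_pi (hTpos m) (by linarith [hTle m, Real.pi_pos]))
      exact (mul_eq_zero.mp key).resolve_right hsm
    exact ⟨⟨hx.1.1, ha⟩, hb⟩
  set D : ℕ → Set E := fun n => B (T n) \ K with hD
  have measD : ∀ n, MeasurableSet (D n) := fun n => (measB _).diff measK
  have hDdisj : Pairwise (Function.onFun Disjoint D) := by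
    intro m n hmn
    rw [Function.onFun, Set.disjoint_left]
    rintro x ⟨hx1, hx1'⟩ ⟨hx2, _⟩
    exact hx1' (hdisj m n hmn ⟨hx1, hx2⟩)
  have hcle : ∀ n, μ (B 0) - μ K ≤ μ (D n) := by
    intro n
    rw [← hBmeas_eq (T n)]
    exact le_measure_diff
  have hsum : (∑' (_ : ℕ), (μ (B 0) - μ K)) ≤ 1 := by
    calc (∑' (_ : ℕ), (μ (B 0) - μ K)) ≤ ∑' n, μ (D n) := ENNReal.tsum_le_tsum hcle
    _ = μ (⋃ n, D n) := (measure_iUnion hDdisj measD).symm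
    _ ≤ μ Set.univ := measure_mono (Set.subset_univ _)
    _ = 1 := measure_univ
  have hc0 : μ (B 0) - μ K = 0 := by
    by_contra hc
    rw [ENNReal.tsum_const_eq_top_of_ne_zero hc] at hsum
    exact absurd hsum (by simp)
  have h1 : μ (B 0) ≤ μ K := tsub_eq_zero_iff_le.mp hc0
  have h2 : μ K ≤ μ (B 0) := by
    rw [hB0]
    exact measure_mono (fun x hx => hx.1)
  rw [← hB0]
  exact le_antisymm h1 h2

def Sset (d : ℕ) (j : ℕ) : Set (EuclideanSpace ℝ (Fin d)) :=
  {x | ∀ i : Fin d, (i : ℕ) < j → x i = 0}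

lemma mem_inner_single_iff {d : ℕ} (i : Fin d) (x : EuclideanSpace ℝ (Fin d)) :
    ⟪x, EuclideanSpace.single i 1⟫ = 0 ↔ x i = 0 := by
  rw [EuclideanSpace.inner_single_right]
  simp

lemma Sset_succ {d : ℕ} (j : ℕ) (hj : j < d) :
    Sset d (j + 1) = Sset d j ∩ {x | ⟪x, EuclideanSpace.single (⟨j, hj⟩ : Fin d) 1⟫ = 0} := by
  ext x
  simp only [Sset, Set.mem_inter_iff, Set.mem_setOf_eq, mem_inner_single_iff]
  constructor
  · intro h
    exact ⟨fun i hi => h i (Nat.lt_succ_of_lt hi), h ⟨j, hj⟩ (Nat.lt_succ_self j)⟩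
  · rintro ⟨h1, h2⟩ i hi
    rcases Nat.lt_succ_iff_lt_or_eq.mp hi with h | h
    · exact h1 i h
    · have : i = (⟨j, hj⟩ : Fin d) := Fin.ext h
      rw [this]; exact h2

lemma meas_Sset {d : ℕ} (j : ℕ) : MeasurableSet (Sset d j) := by
  have : Sset d j = ⋂ i : Fin d, if (i : ℕ) < j then
      {x : EuclideanSpace ℝ (Fin d) | ⟪x, EuclideanSpace.single i 1⟫ = 0} else Set.univ := by
    ext x
    simp only [Sset, Set.mem_iInter, Set.mem_setOf_eq]
    constructor
    · intro h i
      by_cases hij : (i : ℕ) < j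
      · rw [if_pos hij]
        exact (mem_inner_single_iff i x).mpr (h i hij)
      · rw [if_neg hij]; trivial
    · intro h i hij
      have := h i
      rw [if_pos hij] at this
      exact (mem_inner_single_iff i x).mp this
  rw [this]
  exact MeasurableSet.iInter (fun i => by
    split
    · exact meas_inner_zero _
    · exact MeasurableSet.univ)

lemma single_norm_one {d : ℕ} (i : Fin d) : ‖(EuclideanSpace.single i 1 : EuclideanSpace ℝ (Fin d))‖ = 1 := by
  rw [EuclideanSpace.norm_single]; norm_num

lemma single_inner_single {d : ℕ} (i k : Fin d) (h : i ≠ k) :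
    ⟪(EuclideanSpace.single i 1 : EuclideanSpace ℝ (Fin d)), EuclideanSpace.single k 1⟫ = 0 := by
  rw [EuclideanSpace.inner_single_right, EuclideanSpace.single_apply, if_neg (by exact fun hh => h hh.symm)]
  simp

lemma chain_step
    (hrot : ∀ O : EuclideanSpace ℝ (Fin d) ≃ₗᵢ[ℝ] EuclideanSpace ℝ (Fin d),
      Measure.map O μ = μ)
    (k : ℕ) (hk : k + 1 < d) :
    μ (Sset d (k + 1)) = μ (Sset d (k + 2)) := by
  have hk0 : k < d := by omega
  set e : EuclideanSpace ℝ (Fin d) := EuclideanSpace.single (⟨k, hk0⟩ : Fin d) 1 with hee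
  set f : EuclideanSpace ℝ (Fin d) := EuclideanSpace.single (⟨k + 1, hk⟩ : Fin d) 1 with hff
  have hCinv : ∀ t x, x ∈ Sset d k → rotAux e f t x ∈ Sset d k := by
    intro t x hx i hi
    have h1 : e i = 0 := by
      rw [hee, EuclideanSpace.single_apply, if_neg]
      intro hh
      rw [hh] at hi
      exact absurd hi (show ¬ (k < k) by omega)
    have h2 : f i = 0 := by
      rw [hff, EuclideanSpace.single_apply, if_neg]
      intro hh
      rw [hh] at hi
      exact absurd hi (show ¬ (k + 1 < k) by omega)
    show (x + _ • e + _ • f) i = 0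
    rw [PiLp.add_apply, PiLp.add_apply, PiLp.smul_apply, PiLp.smul_apply, h1, h2, hx i hi]
    simp
  have := step_lemma μ hrot e f (single_norm_one _) (single_norm_one _)
    (single_inner_single _ _ (by simp [Fin.ext_iff])) (Sset d k) (meas_Sset k) hCinv
  rw [← Sset_succ k hk0] at this
  rw [Sset_succ (k + 1) hk]
  exact this

lemma Sset_one_zero (hd : 2 ≤ d)
    (hrot : ∀ O : EuclideanSpace ℝ (Fin d) ≃ₗᵢ[ℝ] EuclideanSpace ℝ (Fin d),
      Measure.map O μ = μ)
    (hsupp : μ (Metric.sphere (0 : EuclideanSpace ℝ (Fin d)) 1) = 1) :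
    μ (Sset d 1) = 0 := by
  have key : ∀ n, n + 1 ≤ d → μ (Sset d 1) = μ (Sset d (n + 1)) := by
    intro n
    induction n with
    | zero => intro _; rfl
    | succ m ih =>
      intro hm
      rw [ih (by omega), chain_step μ hrot m (by omega)]
  have hd0 : d - 1 + 1 = d := by omega
  have h1 : μ (Sset d 1) = μ (Sset d d) := by
    have := key (d - 1) (by omega)
    rwa [hd0] at this
  have h2 : Sset d d = {0} := by
    ext x
    simp only [Sset, Set.mem_setOf_eq, Set.mem_singleton_iff]
    constructor
    · intro h
      ext i
      exact h i i.isLt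
    · intro h i _
      rw [h]
      rfl
  have h3 : μ ({0} : Set (EuclideanSpace ℝ (Fin d))) = 0 := by
    have hc : μ (Metric.sphere (0 : EuclideanSpace ℝ (Fin d)) 1)ᶜ = 0 := by
      rw [measure_compl Metric.isClosed_sphere.measurableSet (measure_ne_top μ _), hsupp,
        measure_univ, tsub_self]
    have hsub : ({0} : Set (EuclideanSpace ℝ (Fin d))) ⊆ (Metric.sphere (0 : EuclideanSpace ℝ (Fin d)) 1)ᶜ := by
      intro x hx
      rw [Set.mem_singleton_iff] at hx
      simp [hx]
    exact le_antisymm (le_trans (measure_mono hsub) (le_of_eq hc)) (zero_le)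
  rw [h1, h2, h3]

lemma hyperplane_zero (hd : 2 ≤ d)
    (hrot : ∀ O : EuclideanSpace ℝ (Fin d) ≃ₗᵢ[ℝ] EuclideanSpace ℝ (Fin d),
      Measure.map O μ = μ)
    (hsupp : μ (Metric.sphere (0 : EuclideanSpace ℝ (Fin d)) 1) = 1)
    (v : EuclideanSpace ℝ (Fin d)) (hv : ‖v‖ = 1) :
    μ {x | ⟪x, v⟫ = 0} = 0 := by
  have hd0 : 0 < d := by omega
  set e0 : EuclideanSpace ℝ (Fin d) := EuclideanSpace.single (⟨0, hd0⟩ : Fin d) 1 with he0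
  set O : EuclideanSpace ℝ (Fin d) ≃ₗᵢ[ℝ] EuclideanSpace ℝ (Fin d) :=
    Submodule.reflection (ℝ ∙ (e0 - v))ᗮ with hO
  have hOe0 : O e0 = v := Submodule.reflection_sub (by rw [hv, he0, single_norm_one])
  have hpre : (O : EuclideanSpace ℝ (Fin d) → EuclideanSpace ℝ (Fin d)) ⁻¹' {x | ⟪x, v⟫ = 0}
      = Sset d 1 := by
    ext x
    simp only [Set.mem_preimage, Set.mem_setOf_eq, Sset]
    have : ⟪(O : EuclideanSpace ℝ (Fin d) → EuclideanSpace ℝ (Fin d)) x, v⟫ = ⟪x, e0⟫ := by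
      rw [← hOe0]
      exact O.inner_map_map x e0
    rw [this]
    constructor
    · intro h i hi
      have : i = (⟨0, hd0⟩ : Fin d) := Fin.ext (show (i : ℕ) = (0 : ℕ) by omega)
      rw [this]
      exact (mem_inner_single_iff _ x).mp h
    · intro h
      exact (mem_inner_single_iff _ x).mpr (h ⟨0, hd0⟩ (by simp))
  calc μ {x | ⟪x, v⟫ = 0} = (Measure.map O μ) {x | ⟪x, v⟫ = 0} := by rw [hrot O]
  _ = μ ((O : EuclideanSpace ℝ (Fin d) → EuclideanSpace ℝ (Fin d)) ⁻¹' {x | ⟪x, v⟫ = 0}) :=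
      Measure.map_apply O.continuous.measurable (meas_inner_zero _)
  _ = μ (Sset d 1) := by rw [hpre]
  _ = 0 := Sset_one_zero μ hd hrot hsupp

end Zero

section SgnFacts

lemma sgn_ne_iff (p q : ℝ) : sgn p ≠ sgn q ↔ ¬ (0 ≤ p ↔ 0 ≤ q) := by
  unfold sgn
  by_cases hp : 0 ≤ p <;> by_cases hq : 0 ≤ q <;> simp [hp, hq] <;> norm_num

lemma sgn_eq_neg_self_iff (p : ℝ) : sgn p = sgn (-p) ↔ p = 0 := by
  unfold sgn
  rcases lt_trichotomy p 0 with h | h | h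
  · rw [if_neg (by linarith), if_pos (by linarith)]
    constructor
    · intro hh; norm_num at hh
    · intro hh; linarith
  · simp [h]
  · rw [if_pos (by linarith), if_neg (by linarith)]
    constructor
    · intro hh; norm_num at hh
    · intro hh; linarith

end SgnFacts

section ASet
variable {F : Type*} [NormedAddCommGroup F] [InnerProductSpace ℝ F]

def Aset (a b : F) : Set F := {x | sgn ⟪x, a⟫ ≠ sgn ⟪x, b⟫}

noncomputable def uvec (e f : F) (α : ℝ) : F := Real.cos α • e + Real.sin α • f

lemma uvec_zero (e f : F) : uvec e f 0 = e := by simp [uvec]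

lemma uvec_pi (e f : F) : uvec e f π = -e := by simp [uvec]

variable {e f : F} (he : ‖e‖ = 1) (hf : ‖f‖ = 1) (hef : ⟪e, f⟫ = 0)

include he hf hef in
lemma rot_uvec (t γ : ℝ) : rotAux e f t (uvec e f γ) = uvec e f (t + γ) :=
  rot_uangle he hf hef t γ

-- XOR facts
lemma Aset_sub_union (a b c : F) : Aset a c ⊆ Aset a b ∪ Aset b c := by
  intro x hx
  by_cases h : sgn ⟪x, a⟫ = sgn ⟪x, b⟫
  · right
    show sgn ⟪x, b⟫ ≠ sgn ⟪x, c⟫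
    rw [← h]; exact hx
  · left; exact h

lemma Aset_union_sub (a b c : F) :
    Aset a b ∪ Aset b c ⊆ Aset a c ∪ (Aset a b ∩ Aset b c) := by
  intro x hx
  by_cases h : sgn ⟪x, a⟫ = sgn ⟪x, c⟫
  · right
    rcases hx with h1 | h1
    · exact ⟨h1, fun h2 => h1 (by rw [h, ← h2])⟩
    · exact ⟨fun h2 => h1 (by rw [← h, h2]), h1⟩
  · left; exact h

end ASet

section Main
variable {d : ℕ} (μ : Measure (EuclideanSpace ℝ (Fin d))) [IsProbabilityMeasure μ]

lemma meas_Aset (a b : EuclideanSpace ℝ (Fin d)) : MeasurableSet (Aset a b) := by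
  have hma : MeasurableSet {x : EuclideanSpace ℝ (Fin d) | 0 ≤ ⟪x, a⟫} :=
    measurableSet_le measurable_const (continuous_id.inner continuous_const).measurable
  have hmb : MeasurableSet {x : EuclideanSpace ℝ (Fin d) | 0 ≤ ⟪x, b⟫} :=
    measurableSet_le measurable_const (continuous_id.inner continuous_const).measurable
  have h : Aset a b = ({x : EuclideanSpace ℝ (Fin d) | 0 ≤ ⟪x, a⟫} ∩ {x | 0 ≤ ⟪x, b⟫}ᶜ)
      ∪ ({x : EuclideanSpace ℝ (Fin d) | 0 ≤ ⟪x, a⟫}ᶜ ∩ {x | 0 ≤ ⟪x, b⟫}) := by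
    ext x
    simp only [Aset, Set.mem_setOf_eq, Set.mem_union, Set.mem_inter_iff, Set.mem_compl_iff,
      Set.mem_setOf_eq]
    rw [sgn_ne_iff]
    tauto
  rw [h]
  exact (hma.inter hmb.compl).union (hma.compl.inter hmb)

lemma Aset_rot
    (hrot : ∀ O : EuclideanSpace ℝ (Fin d) ≃ₗᵢ[ℝ] EuclideanSpace ℝ (Fin d),
      Measure.map O μ = μ)
    {e f : EuclideanSpace ℝ (Fin d)} (he : ‖e‖ = 1) (hf : ‖f‖ = 1) (hef : ⟪e, f⟫ = 0)
    (β γ : ℝ) :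
    μ (Aset (uvec e f β) (uvec e f γ)) = μ (Aset (uvec e f 0) (uvec e f (γ - β))) := by
  set O := rot e f he hf hef β with hO
  have hpre : (O : EuclideanSpace ℝ (Fin d) → EuclideanSpace ℝ (Fin d)) ⁻¹'
      (Aset (uvec e f β) (uvec e f γ)) = Aset (uvec e f 0) (uvec e f (γ - β)) := by
    ext x
    simp only [Set.mem_preimage, Aset, Set.mem_setOf_eq]
    have h1 : ⟪(O : EuclideanSpace ℝ (Fin d) → EuclideanSpace ℝ (Fin d)) x, uvec e f β⟫
        = ⟪x, uvec e f 0⟫ := by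
      have : uvec e f β = rotAux e f β (uvec e f 0) := by
        rw [rot_uvec he hf hef, add_zero]
      rw [this]
      exact O.inner_map_map x (uvec e f 0)
    have h2 : ⟪(O : EuclideanSpace ℝ (Fin d) → EuclideanSpace ℝ (Fin d)) x, uvec e f γ⟫
        = ⟪x, uvec e f (γ - β)⟫ := by
      have : uvec e f γ = rotAux e f β (uvec e f (γ - β)) := by
        rw [rot_uvec he hf hef]
        ring_nf
      rw [this]
      exact O.inner_map_map x (uvec e f (γ - β))
    rw [h1, h2]
  calc μ (Aset (uvec e f β) (uvec e f γ))
      = (Measure.map O μ) (Aset (uvec e f β) (uvec e f γ)) := by rw [hrot O]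
  _ = μ ((O : EuclideanSpace ℝ (Fin d) → EuclideanSpace ℝ (Fin d)) ⁻¹'
        (Aset (uvec e f β) (uvec e f γ))) :=
      Measure.map_apply O.continuous.measurable (meas_Aset _ _)
  _ = μ (Aset (uvec e f 0) (uvec e f (γ - β))) := by rw [hpre]

end Main

section Empty
variable {F : Type*} [NormedAddCommGroup F] [InnerProductSpace ℝ F]
variable {e f : F} (he : ‖e‖ = 1) (hf : ‖f‖ = 1) (hef : ⟪e, f⟫ = 0)

lemma Aset_inter_empty {α β : ℝ} (hα : 0 < α) (hβ : 0 < β) (hαβ : α + β < π) :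
    Aset (uvec e f 0) (uvec e f α) ∩ Aset (uvec e f α) (uvec e f (α + β)) = ∅ := by
  ext x
  simp only [Set.mem_inter_iff, Aset, Set.mem_setOf_eq, Set.mem_empty_iff_false, iff_false,
    not_and]
  intro h1 h2
  have hvec : Real.sin (α + β) • uvec e f α
      = Real.sin β • uvec e f 0 + Real.sin α • uvec e f (α + β) := by
    rw [uvec, uvec, uvec]
    match_scalars
    · rw [Real.sin_add, Real.cos_add]
      simp only [Real.cos_zero]
      linear_combination Real.sin β * Real.sin_sq_add_cos_sq α
    · rw [Real.sin_add]
      simp only [Real.sin_zero]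
      ring
  have hin := congrArg (fun w => (⟪x, w⟫ : ℝ)) hvec
  simp only [inner_add_right, real_inner_smul_right] at hin
  rw [sgn_ne_iff] at h1 h2
  have hsα : 0 < Real.sin α := Real.sin_pos_of_pos_of_lt_pi hα (by linarith)
  have hsβ : 0 < Real.sin β := Real.sin_pos_of_pos_of_lt_pi hβ (by linarith)
  have hsαβ : 0 < Real.sin (α + β) := Real.sin_pos_of_pos_of_lt_pi (by linarith) hαβ
  set A := (⟪x, uvec e f 0⟫ : ℝ)
  set B := (⟪x, uvec e f α⟫ : ℝ)
  set C := (⟪x, uvec e f (α + β)⟫ : ℝ)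
  by_cases hb : 0 ≤ B
  · have hA : ¬ 0 ≤ A := fun h => h1 ⟨fun _ => hb, fun _ => h⟩
    have hC : ¬ 0 ≤ C := fun h => h2 ⟨fun _ => h, fun _ => hb⟩
    push_neg at hA hC
    nlinarith
  · have hA : 0 ≤ A := by
      by_contra hA
      exact h1 ⟨fun h => absurd h hA, fun h => absurd h hb⟩
    have hC : 0 ≤ C := by
      by_contra hC
      exact h2 ⟨fun h => absurd h hb, fun h => absurd h hC⟩
    push_neg at hb
    nlinarith

lemma Aset_inter_pi (α : ℝ) :
    Aset (uvec e f 0) (uvec e f α) ∩ Aset (uvec e f α) (uvec e f π)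
      ⊆ {x | ⟪x, e⟫ = 0} := by
  intro x hx
  obtain ⟨h1, h2⟩ := hx
  rw [Aset, Set.mem_setOf_eq, uvec_zero] at h1
  rw [Aset, Set.mem_setOf_eq, uvec_pi, inner_neg_right] at h2
  show ⟪x, e⟫ = 0
  apply (sgn_eq_neg_self_iff (⟪x, e⟫ : ℝ)).mp
  rcases sgn_eq_one_or (⟪x, e⟫ : ℝ) with hA | hA <;>
    rcases sgn_eq_one_or (⟪x, uvec e f α⟫ : ℝ) with hB | hB <;>
      rcases sgn_eq_one_or (-(⟪x, e⟫ : ℝ)) with hN | hN <;>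
        simp_all

end Empty

section QTheta
variable {d : ℕ} (μ : Measure (EuclideanSpace ℝ (Fin d))) [IsProbabilityMeasure μ]

lemma q_theta (hd : 2 ≤ d)
    (hrot : ∀ O : EuclideanSpace ℝ (Fin d) ≃ₗᵢ[ℝ] EuclideanSpace ℝ (Fin d),
      Measure.map O μ = μ)
    (hsupp : μ (Metric.sphere (0 : EuclideanSpace ℝ (Fin d)) 1) = 1)
    {e f : EuclideanSpace ℝ (Fin d)} (he : ‖e‖ = 1) (hf : ‖f‖ = 1) (hef : ⟪e, f⟫ = 0)
    {θ : ℝ} (hθ1 : 0 < θ) (hθ2 : θ < π) :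
    (μ (Aset e (uvec e f θ))).toReal = θ / π := by
  set q : ℝ → ℝ := fun α => (μ (Aset (uvec e f 0) (uvec e f α))).toReal with hq
  have hgoal : Aset e (uvec e f θ) = Aset (uvec e f 0) (uvec e f θ) := by rw [uvec_zero]
  rw [hgoal]
  show q θ = θ / π
  have hfin : ∀ s : Set (EuclideanSpace ℝ (Fin d)), μ s ≠ ⊤ := fun s => measure_ne_top μ s
  have hq0 : ∀ α, 0 ≤ q α := fun α => ENNReal.toReal_nonneg
  have hq1 : ∀ α, q α ≤ 1 := by
    intro α
    have h := prob_le_one (μ := μ) (s := Aset (uvec e f 0) (uvec e f α))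
    have := ENNReal.toReal_mono (by simp) h
    simpa using this
  -- additivity
  have hadd : ∀ α β, 0 < α → 0 < β → α + β < π → q (α + β) = q α + q β := by
    intro α β hα hβ hαβ
    have hempty := Aset_inter_empty (e := e) (f := f) hα hβ hαβ
    have hsets : Aset (uvec e f 0) (uvec e f (α + β))
        = Aset (uvec e f 0) (uvec e f α) ∪ Aset (uvec e f α) (uvec e f (α + β)) := by
      apply Set.Subset.antisymm (Aset_sub_union _ _ _)
      have h := Aset_union_sub (uvec e f 0) (uvec e f α) (uvec e f (α + β))
      rwa [hempty, Set.union_empty] at h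
    have hdisj : Disjoint (Aset (uvec e f 0) (uvec e f α))
        (Aset (uvec e f α) (uvec e f (α + β))) :=
      Set.disjoint_iff_inter_eq_empty.mpr hempty
    have hμ : μ (Aset (uvec e f 0) (uvec e f (α + β)))
        = μ (Aset (uvec e f 0) (uvec e f α)) + μ (Aset (uvec e f α) (uvec e f (α + β))) := by
      rw [hsets]
      exact measure_union hdisj (meas_Aset _ _)
    have hA2 : μ (Aset (uvec e f α) (uvec e f (α + β)))
        = μ (Aset (uvec e f 0) (uvec e f β)) := by
      have h := Aset_rot μ hrot he hf hef α (α + β)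
      rwa [show α + β - α = β by ring] at h
    show (μ (Aset (uvec e f 0) (uvec e f (α + β)))).toReal = _
    rw [hμ, hA2, ENNReal.toReal_add (hfin _) (hfin _)]
  -- the π relation
  have hπadd : ∀ α, 0 < α → α < π → q α + q (π - α) = 1 := by
    intro α hα hαπ
    set A1 := Aset (uvec e f 0) (uvec e f α) with hA1
    set A2 := Aset (uvec e f α) (uvec e f π) with hA2
    set Apq := Aset (uvec e f 0) (uvec e f π) with hApq
    have hzero : μ {x : EuclideanSpace ℝ (Fin d) | ⟪x, e⟫ = 0} = 0 :=
      hyperplane_zero μ hd hrot hsupp e he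
    have hint0 : μ (A1 ∩ A2) = 0 :=
      le_antisymm (le_trans (measure_mono (Aset_inter_pi α)) hzero.le) (zero_le)
    have hU : μ (A1 ∪ A2) = μ Apq := by
      apply le_antisymm
      · have hsub : A1 ∪ A2 ⊆ Apq ∪ (A1 ∩ A2) := Aset_union_sub _ _ _
        calc μ (A1 ∪ A2) ≤ μ (Apq ∪ (A1 ∩ A2)) := measure_mono hsub
        _ ≤ μ Apq + μ (A1 ∩ A2) := measure_union_le _ _
        _ = μ Apq := by rw [hint0, add_zero]
      · exact measure_mono (Aset_sub_union _ _ _)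
    have hsum : μ (A1 ∪ A2) + μ (A1 ∩ A2) = μ A1 + μ A2 :=
      measure_union_add_inter A1 (meas_Aset _ _)
    have hApq1 : μ Apq = 1 := by
      have hset : Apq = {x : EuclideanSpace ℝ (Fin d) | ⟪x, e⟫ = 0}ᶜ := by
        ext x
        rw [hApq, Aset, Set.mem_setOf_eq, uvec_zero, uvec_pi, inner_neg_right]
        rw [Set.mem_compl_iff, Set.mem_setOf_eq]
        exact not_congr (sgn_eq_neg_self_iff (⟪x, e⟫ : ℝ))
      rw [hset, measure_compl (meas_inner_zero _) (hfin _), hzero, measure_univ, tsub_zero]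
    have hA2' : μ A2 = μ (Aset (uvec e f 0) (uvec e f (π - α))) :=
      Aset_rot μ hrot he hf hef α π
    have hfinal : μ A1 + μ (Aset (uvec e f 0) (uvec e f (π - α))) = 1 := by
      rw [← hA2', ← hsum, hint0, add_zero, hU, hApq1]
    show (μ A1).toReal + (μ (Aset (uvec e f 0) (uvec e f (π - α)))).toReal = 1
    rw [← ENNReal.toReal_add (hfin _) (hfin _), hfinal, ENNReal.toReal_one]
  -- monotonicity
  have hmono : ∀ α β, 0 < α → α ≤ β → β < π → q α ≤ q β := by
    intro α β hα hle hβπ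
    rcases eq_or_lt_of_le hle with h | h
    · rw [h]
    · have := hadd α (β - α) hα (by linarith) (by linarith)
      rw [show α + (β - α) = β by ring] at this
      linarith [hq0 (β - α)]
  -- multiples
  have hmul : ∀ n k : ℕ, 2 ≤ n → 1 ≤ k → k ≤ n - 1 →
      q ((k : ℝ) * (π / n)) = (k : ℝ) * q (π / n) := by
    intro n k hn2 hk1 hkn
    have hnR : (0:ℝ) < n := by
      have : (2:ℝ) ≤ (n:ℝ) := by exact_mod_cast hn2
      linarith
    have hππ : (0:ℝ) < π / n := by positivity
    induction k with
    | zero => omega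
    | succ m ih =>
      rcases Nat.eq_zero_or_pos m with hm | hm
      · subst hm; push_cast; rw [one_mul, one_mul]
      · have hih := ih (by omega) (by omega)
        have hmn : (m:ℝ) + 1 + 1 ≤ (n:ℝ) := by
          have h2 : (m + 1) + 1 ≤ n := by omega
          have := (Nat.cast_le (α := ℝ)).mpr h2
          push_cast at this
          linarith
        have hmR : (1:ℝ) ≤ (m:ℝ) := by exact_mod_cast hm
        have hstep := hadd ((m:ℝ) * (π / n)) (π / n)
          (by positivity)
          hππ
          (by
            rw [show (m:ℝ) * (π / n) + π / n = ((m:ℝ) + 1) * π / n by ring, div_lt_iff₀ hnR]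
            nlinarith [Real.pi_pos])
        push_cast
        rw [show ((m:ℝ) + 1) * (π / n) = (m:ℝ) * (π / n) + π / n by ring, hstep]
        push_cast at hih
        rw [hih]
        ring
  -- q (π / n) = 1 / n
  have hqn : ∀ n : ℕ, 2 ≤ n → q (π / n) = 1 / n := by
    intro n hn2
    have hn2R : (2:ℝ) ≤ (n:ℝ) := by exact_mod_cast hn2
    have hnR : (0:ℝ) < n := by linarith
    have hn1R : (1:ℝ) < n := by linarith
    have hkey := hπadd (π / n) (by positivity) (div_lt_self Real.pi_pos hn1R)
    have h1 := hmul n (n - 1) hn2 (by omega) le_rfl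
    have hcast : ((n - 1 : ℕ) : ℝ) = (n:ℝ) - 1 := by
      rw [Nat.cast_sub (by omega : 1 ≤ n)]
      simp
    rw [hcast] at h1
    have h2 : ((n:ℝ) - 1) * (π / n) = π - π / n := by
      field_simp
    rw [h2] at h1
    rw [h1] at hkey
    have hq := hkey
    rw [eq_div_iff (ne_of_gt hnR)]
    nlinarith [hq]
  -- fractions
  have hfrac : ∀ n k : ℕ, 2 ≤ n → 1 ≤ k → k ≤ n - 1 →
      q ((k : ℝ) * (π / n)) = (k : ℝ) / n := by
    intro n k hn2 hk1 hkn
    rw [hmul n k hn2 hk1 hkn, hqn n hn2]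
    ring
  -- squeeze
  have key : ∀ n : ℕ, 2 ≤ n → |q θ - θ / π| ≤ 1 / n := by
    intro n hn2
    have hπpos := Real.pi_pos
    have hnR : (0:ℝ) < n := by
      have : (2:ℝ) ≤ (n:ℝ) := by exact_mod_cast hn2
      linarith
    set k := ⌊(n:ℝ) * θ / π⌋₊ with hkdef
    have hk1' : (k:ℝ) * π ≤ (n:ℝ) * θ := by
      have h := Nat.floor_le (show (0:ℝ) ≤ (n:ℝ) * θ / π by positivity)
      rw [le_div_iff₀ hπpos] at h
      exact h
    have hk2' : (n:ℝ) * θ < ((k:ℝ) + 1) * π := by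
      have h := Nat.lt_floor_add_one ((n:ℝ) * θ / π)
      rw [div_lt_iff₀ hπpos] at h
      linarith
    have hkltn : (k:ℝ) < (n:ℝ) := by nlinarith
    have hknat : k + 1 ≤ n := by
      have : k < n := by exact_mod_cast hkltn
      omega
    have hb1 : (k:ℝ) / n ≤ θ / π := by
      rw [div_le_div_iff₀ hnR hπpos]
      linarith
    have hb2 : θ / π ≤ ((k:ℝ) + 1) / n := by
      rw [div_le_div_iff₀ hπpos hnR]
      linarith
    have hlow : (k:ℝ) / n ≤ q θ := by
      rcases Nat.eq_zero_or_pos k with h0 | h0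
      · rw [h0]
        simpa using hq0 θ
      · have hkR : (1:ℝ) ≤ (k:ℝ) := by exact_mod_cast h0
        have hle : (k:ℝ) * (π / n) ≤ θ := by
          rw [show (k:ℝ) * (π / n) = (k:ℝ) * π / n by ring, div_le_iff₀ hnR]
          linarith
        have hkn1 : k ≤ n - 1 := by omega
        have := hmono ((k:ℝ) * (π / n)) θ (by positivity) hle hθ2
        rwa [hfrac n k hn2 h0 hkn1] at this
    have hup : q θ ≤ ((k:ℝ) + 1) / n := by
      by_cases hc : k + 1 ≤ n - 1
      · have hcR : ((k:ℝ) + 1) + 1 ≤ (n:ℝ) := by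
          have h2 : (k + 1) + 1 ≤ n := by omega
          have := (Nat.cast_le (α := ℝ)).mpr h2
          push_cast at this
          linarith
        have h1 : θ ≤ ((k:ℝ) + 1) * (π / n) := by
          rw [show ((k:ℝ) + 1) * (π / n) = ((k:ℝ) + 1) * π / n by ring, le_div_iff₀ hnR]
          linarith
        have h2 : ((k:ℝ) + 1) * (π / n) < π := by
          rw [show ((k:ℝ) + 1) * (π / n) = ((k:ℝ) + 1) * π / n by ring, div_lt_iff₀ hnR]
          nlinarith
        have hm := hmono θ (((k:ℝ) + 1) * (π / n)) hθ1 h1 h2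
        have hf := hfrac n (k + 1) hn2 (by omega) hc
        push_cast at hf
        rwa [hf] at hm
      · have hge : (1:ℝ) ≤ ((k:ℝ) + 1) / n := by
          rw [le_div_iff₀ hnR]
          have h2 : n ≤ k + 1 := by omega
          have := (Nat.cast_le (α := ℝ)).mpr h2
          push_cast at this
          linarith
        linarith [hq1 θ]
    have hiden : (k:ℝ) / n + 1 / n = ((k:ℝ) + 1) / n := by ring
    rw [abs_le]
    constructor <;> linarith
  -- conclude
  by_contra hne
  have hδ : 0 < |q θ - θ / π| := abs_pos.mpr (sub_ne_zero.mpr hne)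
  obtain ⟨m, hm⟩ := exists_nat_gt (1 / |q θ - θ / π|)
  have hkey := key (m + 2) (by omega)
  have hmR : (0:ℝ) < (m:ℝ) + 2 := by positivity
  have hlt : 1 / ((m:ℝ) + 2) < |q θ - θ / π| := by
    have h' : 1 < (m:ℝ) * |q θ - θ / π| := by
      rw [div_lt_iff₀ hδ] at hm
      linarith
    rw [div_lt_iff₀ hmR]
    nlinarith [hδ]
  have hcast : ((m + 2 : ℕ) : ℝ) = (m:ℝ) + 2 := by push_cast; ring
  rw [hcast] at hkey
  linarith

end QTheta

/-- The ϑ-space lemma: `E_x[sgn⟪x,wₘ⟫ · sgn⟪x,wₙ⟫] = 1 - 2θ/π` for `x`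
uniform (rotation-invariant probability measure supported on the unit sphere)
in `ℝ^d`, `d ≥ 2`, where `θ` is the angle between the nonzero vectors. -/
theorem lsh_expectation
    (d : ℕ) (hd : 2 ≤ d)
    (wm wn : EuclideanSpace ℝ (Fin d)) (hwm : wm ≠ 0) (hwn : wn ≠ 0)
    (μ : Measure (EuclideanSpace ℝ (Fin d))) [IsProbabilityMeasure μ]
    (hsupp : μ (Metric.sphere (0 : EuclideanSpace ℝ (Fin d)) 1) = 1)
    (hrot : ∀ O : EuclideanSpace ℝ (Fin d) ≃ₗᵢ[ℝ] EuclideanSpace ℝ (Fin d),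
      Measure.map O μ = μ)
    (θ : ℝ) (hθ : θ = Real.arccos ((inner ℝ wm wn : ℝ) / (‖wm‖ * ‖wn‖))) :
    ∫ x, sgn (inner ℝ x wm : ℝ) * sgn (inner ℝ x wn : ℝ) ∂μ = 1 - 2 * θ / π := by
  have hm : 0 < ‖wm‖ := norm_pos_iff.mpr hwm
  have hn : 0 < ‖wn‖ := norm_pos_iff.mpr hwn
  set u : EuclideanSpace ℝ (Fin d) := ‖wm‖⁻¹ • wm with hu
  set v : EuclideanSpace ℝ (Fin d) := ‖wn‖⁻¹ • wn with hv
  have hun : ‖u‖ = 1 := norm_smul_inv_norm hwm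
  have hvn : ‖v‖ = 1 := norm_smul_inv_norm hwn
  have hsgn_m : ∀ x : EuclideanSpace ℝ (Fin d), sgn (⟪x, wm⟫ : ℝ) = sgn ⟪x, u⟫ := by
    intro x
    rw [hu, real_inner_smul_right, sgn_mul_pos (inv_pos.mpr hm)]
  have hsgn_n : ∀ x : EuclideanSpace ℝ (Fin d), sgn (⟪x, wn⟫ : ℝ) = sgn ⟪x, v⟫ := by
    intro x
    rw [hv, real_inner_smul_right, sgn_mul_pos (inv_pos.mpr hn)]
  -- θ is arccos of ⟪u, v⟫
  have huv : (⟪u, v⟫ : ℝ) = (⟪wm, wn⟫ : ℝ) / (‖wm‖ * ‖wn‖) := by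
    rw [hu, hv, real_inner_smul_left, real_inner_smul_right]
    field_simp
  have hθ' : θ = Real.arccos ⟪u, v⟫ := by rw [hθ, huv]
  have huv1 : |(⟪u, v⟫ : ℝ)| ≤ 1 := by
    have := abs_real_inner_le_norm u v
    rwa [hun, hvn, mul_one] at this
  rw [abs_le] at huv1
  have hcosθ : Real.cos θ = ⟪u, v⟫ := by
    rw [hθ']
    exact Real.cos_arccos huv1.1 huv1.2
  have hθ0 : 0 ≤ θ := hθ' ▸ Real.arccos_nonneg _
  have hθπ : θ ≤ π := hθ' ▸ Real.arccos_le_pi _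
  -- the key measure computation
  have hmeas : (μ (Aset u v)).toReal = θ / π := by
    rcases eq_or_lt_of_le hθ0 with hz | hpos
    · -- θ = 0 : u = v
      have : (⟪u, v⟫ : ℝ) = 1 := by rw [← hcosθ, ← hz, Real.cos_zero]
      have huv_eq : u = v := (inner_eq_one_iff_of_norm_eq_one hun hvn).mp this
      have : Aset u v = ∅ := by
        ext x
        simp [Aset, huv_eq]
      rw [this, measure_empty, ← hz]
      simp
    · rcases eq_or_lt_of_le hθπ with hπe | hπlt
      · -- θ = π : v = -u
        have h1 : (⟪u, -v⟫ : ℝ) = 1 := by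
          rw [inner_neg_right, ← hcosθ, hπe, Real.cos_pi]
          norm_num
        have huv_eq : u = -v := (inner_eq_one_iff_of_norm_eq_one hun (by rw [norm_neg, hvn])).mp h1
        have hveq : v = -u := by rw [huv_eq, neg_neg]
        have hset : Aset u v = {x : EuclideanSpace ℝ (Fin d) | ⟪x, u⟫ = 0}ᶜ := by
          ext x
          rw [Aset, Set.mem_setOf_eq, hveq, inner_neg_right, Set.mem_compl_iff, Set.mem_setOf_eq]
          exact not_congr (sgn_eq_neg_self_iff (⟪x, u⟫ : ℝ))
        have hzero : μ {x : EuclideanSpace ℝ (Fin d) | ⟪x, u⟫ = 0} = 0 :=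
          hyperplane_zero μ hd hrot hsupp u hun
        rw [hset, measure_compl (meas_inner_zero _) (measure_ne_top μ _), hzero, measure_univ,
          tsub_zero, ENNReal.toReal_one, hπe, div_self (ne_of_gt Real.pi_pos)]
      · -- 0 < θ < π
        have hsin : 0 < Real.sin θ := Real.sin_pos_of_pos_of_lt_pi hpos hπlt
        set w : EuclideanSpace ℝ (Fin d) := v - Real.cos θ • u with hw
        set f : EuclideanSpace ℝ (Fin d) := (Real.sin θ)⁻¹ • w with hff
        have hww : (⟪w, w⟫ : ℝ) = Real.sin θ ^ 2 := by
          have hvu : (⟪v, u⟫ : ℝ) = Real.cos θ := by rw [real_inner_comm]; exact hcosθ.symm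
          have huv' : (⟪u, v⟫ : ℝ) = Real.cos θ := hcosθ.symm
          rw [hw]
          simp only [inner_sub_left, inner_sub_right, real_inner_smul_left, real_inner_smul_right]
          rw [real_inner_self_eq_norm_sq, real_inner_self_eq_norm_sq, hun, hvn, hvu, huv']
          linear_combination -Real.sin_sq_add_cos_sq θ
        have hwnorm : ‖w‖ = Real.sin θ := by
          rw [norm_eq_sqrt_real_inner, hww, Real.sqrt_sq hsin.le]
        have hfn : ‖f‖ = 1 := by
          rw [hff, norm_smul, hwnorm, Real.norm_eq_abs, abs_of_pos (inv_pos.mpr hsin)]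
          exact inv_mul_cancel₀ (ne_of_gt hsin)
        have hufz : (⟪u, w⟫ : ℝ) = 0 := by
          rw [hw]
          simp only [inner_sub_right, real_inner_smul_right]
          rw [real_inner_self_eq_norm_sq, hun, hcosθ]
          ring
        have huf : (⟪u, f⟫ : ℝ) = 0 := by
          rw [hff, real_inner_smul_right, hufz, mul_zero]
        have hveq : uvec u f θ = v := by
          have hsne : Real.sin θ ≠ 0 := ne_of_gt hsin
          rw [uvec, hff, hw]
          match_scalars <;> field_simp <;> ring
        have := q_theta μ hd hrot hsupp hun hfn huf hpos hπlt
        rwa [hveq] at this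
  -- rewrite the integrand
  have hint : ∀ x : EuclideanSpace ℝ (Fin d),
      sgn (⟪x, wm⟫ : ℝ) * sgn (⟪x, wn⟫ : ℝ)
        = Set.indicator (Aset u v) (fun _ => (-2 : ℝ)) x + 1 := by
    intro x
    rw [hsgn_m x, hsgn_n x]
    by_cases hx : x ∈ Aset u v
    · rw [Set.indicator_of_mem hx, sgn_mul_of_ne hx]
      norm_num
    · rw [Set.indicator_of_notMem hx, sgn_mul_of_eq (not_not.mp hx)]
      norm_num
  calc ∫ x, sgn (⟪x, wm⟫ : ℝ) * sgn (⟪x, wn⟫ : ℝ) ∂μ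
      = ∫ x, (Set.indicator (Aset u v) (fun _ => (-2 : ℝ)) x + 1) ∂μ := by
        apply integral_congr_ae
        filter_upwards with x
        exact hint x
  _ = (∫ x, Set.indicator (Aset u v) (fun _ => (-2 : ℝ)) x ∂μ) + ∫ _, (1 : ℝ) ∂μ := by
        apply integral_add
        · exact (integrable_const (-2 : ℝ)).indicator (meas_Aset u v)
        · exact integrable_const 1
  _ = (μ (Aset u v)).toReal • (-2 : ℝ) + 1 := by
        rw [integral_indicator_const (-2 : ℝ) (meas_Aset u v)]
        simp [Measure.real]
  _ = 1 - 2 * θ / π := by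
        rw [hmeas, smul_eq_mul]
        ring
end

section
/- For two nonzero vectors w_m, w_n ∈ R², with x = (cos φ, sin φ) where φ is uniform on [0, 2π), the probability that sgn(⟨x, w_m⟩) ≠ sgn(⟨x, w_n⟩) equals θ/π, where θ ∈ [0, π] is the angle between w_m and w_n. -/
open MeasureTheory Real

lemma sgn_mul_left (r c : ℝ) (hr : 0 < r) : sgn (r * c) = sgn c := by
  unfold sgn
  rcases le_or_gt 0 c with h | h
  · rw [if_pos (mul_nonneg hr.le h), if_pos h]
  · rw [if_neg (not_le.mpr (mul_neg_of_pos_of_neg hr h)), if_neg (not_le.mpr h)]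

lemma sgn_ne_iff_s15 (c1 c2 : ℝ) (h1 : c1 ≠ 0) (h2 : c2 ≠ 0) :
    sgn c1 ≠ sgn c2 ↔ c1 * c2 < 0 := by
  unfold sgn
  rcases h1.lt_or_gt with h1 | h1 <;> rcases h2.lt_or_gt with h2 | h2
  · simp only [if_neg (not_le.mpr h1), if_neg (not_le.mpr h2)]
    exact ⟨fun h => absurd rfl h, fun h => by nlinarith⟩
  · simp only [if_neg (not_le.mpr h1), if_pos h2.le]
    exact ⟨fun _ => mul_neg_of_neg_of_pos h1 h2, fun _ => by norm_num⟩
  · simp only [if_pos h1.le, if_neg (not_le.mpr h2)]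
    exact ⟨fun _ => mul_neg_of_pos_of_neg h1 h2, fun _ => by norm_num⟩
  · simp only [if_pos h1.le, if_pos h2.le]
    exact ⟨fun h => absurd rfl h, fun h => by nlinarith⟩

lemma vol_inter_Ioc_eq (A : Set ℝ) (hA : MeasurableSet A) (T : ℝ) (hT : 0 < T)
    (hper : ∀ x : ℝ, x + T ∈ A ↔ x ∈ A) (s t : ℝ) :
    volume (A ∩ Set.Ioc s (s+T)) = volume (A ∩ Set.Ioc t (t+T)) := by
  set f : ℝ → ℝ := A.indicator fun _ => 1 with hf
  have hfper : Function.Periodic f T := by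
    intro y
    by_cases h : y ∈ A
    · simp [hf, Set.indicator_of_mem, h, (hper y).mpr h]
    · have h2 : y + T ∉ A := fun hc => h ((hper y).mp hc)
      simp [hf, Set.indicator_of_notMem, h, h2]
  have hint : ∀ u : ℝ, ∫ x in u..(u+T), f x = (volume (A ∩ Set.Ioc u (u+T))).toReal := by
    intro u
    rw [intervalIntegral.integral_of_le (by linarith), hf,
      MeasureTheory.setIntegral_indicator hA, MeasureTheory.setIntegral_const]
    rw [Set.inter_comm]
    simp
    rfl
  have h := hfper.intervalIntegral_add_eq s t
  rw [hint s, hint t] at h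
  have h1 : volume (A ∩ Set.Ioc s (s+T)) ≠ ⊤ :=
    (lt_of_le_of_lt (measure_mono Set.inter_subset_right) measure_Ioc_lt_top).ne
  have h2 : volume (A ∩ Set.Ioc t (t+T)) ≠ ⊤ :=
    (lt_of_le_of_lt (measure_mono Set.inter_subset_right) measure_Ioc_lt_top).ne
  exact (ENNReal.toReal_eq_toReal_iff' h1 h2).mp h

lemma key_measure (a γ : ℝ) (ha0 : 0 ≤ a) (haπ : a ≤ π) :
    volume ({φ : ℝ | Real.cos (2*φ - γ) < Real.cos a} ∩ Set.Ico 0 (2*π))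
      = ENNReal.ofReal (2*(π - a)) := by
  set A := {φ : ℝ | Real.cos (2*φ - γ) < Real.cos a} with hAdef
  have hA : MeasurableSet A :=
    measurableSet_lt (Real.continuous_cos.comp (by continuity)).measurable measurable_const
  have hper : ∀ x : ℝ, x + π ∈ A ↔ x ∈ A := by
    intro x
    simp only [hAdef, Set.mem_setOf_eq]
    rw [show 2*(x+π) - γ = (2*x - γ) + 2*π by ring, Real.cos_add_two_pi]
  have h1 : volume (A ∩ Set.Ico 0 (2*π)) = volume (A ∩ Set.Ioc 0 (2*π)) :=
    measure_congr ((Filter.EventuallyEq.refl _ _).inter MeasureTheory.Ico_ae_eq_Ioc)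
  set t := (a + γ)/2 with ht
  have base : A ∩ Set.Ioc t (t+π) = Set.Ioo t (t + (π - a)) := by
    ext φ
    simp only [hAdef, Set.mem_inter_iff, Set.mem_setOf_eq, Set.mem_Ioc, Set.mem_Ioo]
    constructor
    · rintro ⟨hcos, hl, hr⟩
      refine ⟨hl, ?_⟩
      by_contra hge
      push_neg at hge
      have hb1 : -(a) ≤ 2*φ - γ - 2*π := by rw [ht] at hge; linarith
      have hb2 : 2*φ - γ - 2*π ≤ a := by rw [ht] at hr; linarith
      have habs : |2*φ - γ - 2*π| ≤ a := abs_le.mpr ⟨hb1, hb2⟩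
      have : Real.cos a ≤ Real.cos (2*φ - γ - 2*π) := by
        rw [← Real.cos_abs (2*φ - γ - 2*π)]
        exact Real.cos_le_cos_of_nonneg_of_le_pi (abs_nonneg _) haπ habs
      rw [Real.cos_sub_two_pi] at this
      linarith
    · rintro ⟨hl, hr⟩
      have hφπ : φ ≤ t + π := by linarith
      refine ⟨?_, hl, hφπ⟩
      have hu1 : a < 2*φ - γ := by rw [ht] at hl; linarith
      have hu2 : 2*φ - γ < 2*π - a := by rw [ht] at hr; linarith
      rcases le_or_gt (2*φ - γ) π with hc | hc
      · exact Real.cos_lt_cos_of_nonneg_of_le_pi ha0 hc hu1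
      · rw [← Real.cos_two_pi_sub]
        exact Real.cos_lt_cos_of_nonneg_of_le_pi ha0 (by linarith) (by linarith)
  have hbase : volume (A ∩ Set.Ioc t (t+π)) = ENNReal.ofReal (π - a) := by
    rw [base, Real.volume_Ioo]; ring_nf
  have e1 : volume (A ∩ Set.Ioc 0 π) = ENNReal.ofReal (π - a) := by
    have h := vol_inter_Ioc_eq A hA π Real.pi_pos hper 0 t
    rw [zero_add] at h
    rw [h, hbase]
  have e2 : volume (A ∩ Set.Ioc π (2*π)) = ENNReal.ofReal (π - a) := by
    have h := vol_inter_Ioc_eq A hA π Real.pi_pos hper π t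
    rw [show π + π = 2*π by ring] at h
    rw [h, hbase]
  have split : volume (A ∩ Set.Ioc 0 (2*π))
      = volume (A ∩ Set.Ioc 0 π) + volume (A ∩ Set.Ioc π (2*π)) := by
    rw [← measure_union (Disjoint.mono Set.inter_subset_right Set.inter_subset_right
        (Set.Ioc_disjoint_Ioc_of_le le_rfl)) (hA.inter measurableSet_Ioc)]
    rw [← Set.inter_union_distrib_left,
      Set.Ioc_union_Ioc_eq_Ioc Real.pi_pos.le (by linarith [Real.pi_pos])]
  rw [h1, split, e1, e2, ← ENNReal.ofReal_add (by linarith) (by linarith)]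
  ring_nf

/-- Planar case of the random hyperplane hashing lemma: for `φ` uniform on
`[0, 2π)` and `x(φ) = (cos φ, sin φ)`, the probability that the hashes of two
nonzero vectors `wₘ, wₙ ∈ ℝ²` disagree equals `θ/π`, where `θ` is the angle
between them. -/
theorem lsh_planar_case
    (wm wn : EuclideanSpace ℝ (Fin 2)) (hwm : wm ≠ 0) (hwn : wn ≠ 0)
    (θ : ℝ) (hθ : θ = Real.arccos ((inner ℝ wm wn : ℝ) / (‖wm‖ * ‖wn‖)))
    (P : Measure ℝ)
    (hP : P = (ENNReal.ofReal (2 * π))⁻¹ • volume.restrict (Set.Ico 0 (2 * π)))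
    (x : ℝ → EuclideanSpace ℝ (Fin 2))
    (hx : x = fun φ => (WithLp.equiv 2 (Fin 2 → ℝ)).symm ![Real.cos φ, Real.sin φ]) :
    P {φ | sgn (inner ℝ (x φ) wm : ℝ) ≠ sgn (inner ℝ (x φ) wn : ℝ)}
      = ENNReal.ofReal (θ / π) := by
  subst hP hx
  -- polar coordinates for wm
  set zm : ℂ := ⟨wm 0, wm 1⟩ with hzm
  set zn : ℂ := ⟨wn 0, wn 1⟩ with hzn
  have hzm0 : zm ≠ 0 := by
    intro h
    apply hwm
    have h0 : wm 0 = 0 := congrArg Complex.re h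
    have h1 : wm 1 = 0 := congrArg Complex.im h
    ext i
    fin_cases i <;> simp [h0, h1]
  have hzn0 : zn ≠ 0 := by
    intro h
    apply hwn
    have h0 : wn 0 = 0 := congrArg Complex.re h
    have h1 : wn 1 = 0 := congrArg Complex.im h
    ext i
    fin_cases i <;> simp [h0, h1]
  set rm : ℝ := ‖zm‖ with hrm
  set rn : ℝ := ‖zn‖ with hrn
  set α : ℝ := zm.arg with hα
  set β : ℝ := zn.arg with hβ
  have hrm0 : 0 < rm := by simpa [hrm] using hzm0
  have hrn0 : 0 < rn := by simpa [hrn] using hzn0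
  have hre_m : wm 0 = rm * Real.cos α := by
    rw [hα, Complex.cos_arg hzm0, hrm]; field_simp
    rfl
  have him_m : wm 1 = rm * Real.sin α := by
    rw [hα, Complex.sin_arg, hrm]; field_simp
    rfl
  have hre_n : wn 0 = rn * Real.cos β := by
    rw [hβ, Complex.cos_arg hzn0, hrn]; field_simp
    rfl
  have him_n : wn 1 = rn * Real.sin β := by
    rw [hβ, Complex.sin_arg, hrn]; field_simp
    rfl
  have hnm : ‖wm‖ = rm := by
    rw [EuclideanSpace.norm_eq, hrm, Complex.norm_def, hzm, Complex.normSq_mk]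
    simp only [Fin.sum_univ_two, Real.norm_eq_abs, sq_abs]
    congr 1; ring
  have hnn : ‖wn‖ = rn := by
    rw [EuclideanSpace.norm_eq, hrn, Complex.norm_def, hzn, Complex.normSq_mk]
    simp only [Fin.sum_univ_two, Real.norm_eq_abs, sq_abs]
    congr 1; ring
  -- inner products
  have hinner : ∀ (w : EuclideanSpace ℝ (Fin 2)) (φ : ℝ),
      (inner ℝ ((WithLp.equiv 2 (Fin 2 → ℝ)).symm ![Real.cos φ, Real.sin φ]) w : ℝ)
        = Real.cos φ * w 0 + Real.sin φ * w 1 := by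
    intro w φ
    simp [PiLp.inner_apply, RCLike.inner_apply, WithLp.equiv_symm_apply, Fin.sum_univ_two]
    ring
  have hinner_m : ∀ φ : ℝ,
      (inner ℝ ((WithLp.equiv 2 (Fin 2 → ℝ)).symm ![Real.cos φ, Real.sin φ]) wm : ℝ)
        = rm * Real.cos (φ - α) := by
    intro φ
    rw [hinner, hre_m, him_m, Real.cos_sub]; ring
  have hinner_n : ∀ φ : ℝ,
      (inner ℝ ((WithLp.equiv 2 (Fin 2 → ℝ)).symm ![Real.cos φ, Real.sin φ]) wn : ℝ)
        = rn * Real.cos (φ - β) := by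
    intro φ
    rw [hinner, hre_n, him_n, Real.cos_sub]; ring
  have hinner_mn : (inner ℝ wm wn : ℝ) = rm * rn * Real.cos (α - β) := by
    have : (inner ℝ wm wn : ℝ) = wm 0 * wn 0 + wm 1 * wn 1 := by
      simp [PiLp.inner_apply, RCLike.inner_apply, Fin.sum_univ_two]
      ring
    rw [this, hre_m, him_m, hre_n, him_n, Real.cos_sub]; ring
  have hθ' : θ = Real.arccos (Real.cos (α - β)) := by
    rw [hθ, hinner_mn, hnm, hnn]
    congr 1
    field_simp
  have hθ0 : 0 ≤ θ := by rw [hθ']; exact Real.arccos_nonneg _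
  have hθπ : θ ≤ π := by rw [hθ']; exact Real.arccos_le_pi _
  have hcosθ : Real.cos θ = Real.cos (α - β) := by
    rw [hθ']
    exact Real.cos_arccos (Real.neg_one_le_cos _) (Real.cos_le_one _)
  -- the comparison set
  set a : ℝ := π - θ with hadef
  have hcosa : Real.cos a = -Real.cos (α - β) := by
    rw [hadef, Real.cos_pi_sub, hcosθ]
  set A := {φ : ℝ | Real.cos (2*φ - (α + β)) < Real.cos a} with hAdef
  set S := {φ : ℝ | sgn (inner ℝ ((WithLp.equiv 2 (Fin 2 → ℝ)).symm ![Real.cos φ, Real.sin φ]) wm : ℝ)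
      ≠ sgn (inner ℝ ((WithLp.equiv 2 (Fin 2 → ℝ)).symm ![Real.cos φ, Real.sin φ]) wn : ℝ)} with hSdef
  set Z := {φ : ℝ | Real.cos (φ - α) = 0} ∪ {φ : ℝ | Real.cos (φ - β) = 0} with hZdef
  have hZ0 : volume Z = 0 := by
    rw [hZdef]
    refine measure_union_null ?_ ?_
    · refine measure_mono_null (fun φ hφ => ?_)
        ((Set.countable_range (fun k : ℤ => (2*(k:ℝ)+1)*π/2 + α)).measure_zero volume)
      rw [Set.mem_setOf_eq, Real.cos_eq_zero_iff] at hφ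
      obtain ⟨k, hk⟩ := hφ
      exact ⟨k, by linarith⟩
    · refine measure_mono_null (fun φ hφ => ?_)
        ((Set.countable_range (fun k : ℤ => (2*(k:ℝ)+1)*π/2 + β)).measure_zero volume)
      rw [Set.mem_setOf_eq, Real.cos_eq_zero_iff] at hφ
      obtain ⟨k, hk⟩ := hφ
      exact ⟨k, by linarith⟩
  have hpt : ∀ φ : ℝ, φ ∉ Z → (φ ∈ S ↔ φ ∈ A) := by
    intro φ hφ
    rw [hZdef, Set.mem_union, not_or] at hφ
    obtain ⟨h1, h2⟩ := hφ
    rw [Set.mem_setOf_eq] at h1 h2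
    rw [hSdef, hAdef, Set.mem_setOf_eq, Set.mem_setOf_eq, hinner_m, hinner_n,
      sgn_mul_left _ _ hrm0, sgn_mul_left _ _ hrn0, sgn_ne_iff_s15 _ _ h1 h2]
    have prod : Real.cos (φ - α) * Real.cos (φ - β)
        = (Real.cos (2*φ - (α + β)) + Real.cos (α - β)) / 2 := by
      have e1 : Real.cos (2*φ - (α + β))
          = Real.cos (φ-α) * Real.cos (φ-β) - Real.sin (φ-α) * Real.sin (φ-β) := by
        rw [show 2*φ - (α + β) = (φ - α) + (φ - β) by ring, Real.cos_add]
      have e2 : Real.cos (α - β)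
          = Real.cos (φ-β) * Real.cos (φ-α) + Real.sin (φ-β) * Real.sin (φ-α) := by
        rw [show α - β = (φ - β) - (φ - α) by ring, Real.cos_sub]
      rw [e1, e2]
      ring
    rw [prod, hcosa]
    constructor <;> intro h <;> linarith
  have hSA : S =ᵐ[volume] A := by
    rw [MeasureTheory.ae_eq_set]
    constructor <;> refine measure_mono_null ?_ hZ0
    · intro φ hφ
      by_contra hz
      exact hφ.2 ((hpt φ hz).mp hφ.1)
    · intro φ hφ
      by_contra hz
      exact hφ.2 ((hpt φ hz).mpr hφ.1)
  have hmeas : volume (S ∩ Set.Ico 0 (2*π)) = ENNReal.ofReal (2*θ) := by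
    have h := measure_congr (hSA.inter (Filter.EventuallyEq.refl _ (Set.Ico (0:ℝ) (2*π))))
    rw [h, hAdef, key_measure a (α + β) (by rw [hadef]; linarith) (by rw [hadef]; linarith)]
    congr 1
    rw [hadef]; ring
  rw [Measure.smul_apply, smul_eq_mul, Measure.restrict_apply' measurableSet_Ico]
  rw [hmeas]
  have hπ : (0:ℝ) < π := Real.pi_pos
  have e : ENNReal.ofReal (2*θ) = ENNReal.ofReal (2*π) * ENNReal.ofReal (θ/π) := by
    rw [← ENNReal.ofReal_mul (by positivity)]
    congr 1
    field_simp
  rw [e, ← mul_assoc,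
    ENNReal.inv_mul_cancel (ENNReal.ofReal_pos.mpr (by positivity)).ne' ENNReal.ofReal_ne_top,
    one_mul]
end
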